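/- arXiv:2411.13479 — 9 statements merged into one kernel-verified Lean document; each statement's English description precedes it below -/
import Mathlib

section
/- Fix a miscoverage level α ∈ (0,1), a structural matrix H, and a symmetric positive definite m×m real matrix A, and set P_A = H(HᵀAH)⁻¹HᵀA. Let N ≥ 1 and, for t = 1,…,N, let y_t ∈ Im(H) and ŷ_t ∈ ℝ^m be arbitrary. Define the non-conformity scores š_t = ‖y_t − ŷ_t‖_A and s̊_t = ‖y_t − P_A ŷ_t‖_A, and let q̌ and q̊ be the ⌈(N+1)(1−α)⌉-th order statistics of (š_t)_{t≤N} and (s̊_t)_{t≤N} respectively (with the convention that the (N+1)-th order statistic equals +∞). Then q̊ ≤ q̌, and consequently, for all centers c, c' ∈ ℝ^m, the m-dimensional Lebesgue measure of the ellipsoid {y ∈ ℝ^m : ‖y − c‖_A ≤ q̊} is at most that of {y ∈ ℝ^m : ‖y − c'‖_A ≤ q̌}. -/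
open MeasureTheory ProbabilityTheory Matrix
open scoped ENNReal

/-- The `k`-th order statistic (1-indexed) of `N` real numbers,
with junk value `0` outside the range `1 ≤ k ≤ N`. -/
noncomputable def ostat {N : ℕ} (s : Fin N → ℝ) (k : ℕ) : ℝ :=
  if h : 1 ≤ k ∧ k ≤ N then (s ∘ Tuple.sort s) ⟨k - 1, by omega⟩ else 0

/-- The `k`-th order statistic as an extended real, with the conventions
`s_(0) = -∞` and `s_(k) = +∞` for `k > N`. -/
noncomputable def ostatE {N : ℕ} (s : Fin N → ℝ) (k : ℕ) : EReal :=
  if 1 ≤ k ∧ k ≤ N then ((ostat s k : ℝ) : EReal) else if k = 0 then ⊥ else ⊤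

/-- The `A`-norm `‖u‖_A = √(uᵀ A u)`. -/
noncomputable def anorm {ι : Type*} [Fintype ι] (A : Matrix ι ι ℝ) (u : ι → ℝ) : ℝ :=
  Real.sqrt (u ⬝ᵥ A.mulVec u)

lemma sorted_pointwise_le {N : ℕ} {s s' : Fin N → ℝ} (h : ∀ t, s t ≤ s' t) (i : Fin N) :
    (s ∘ Tuple.sort s) i ≤ (s' ∘ Tuple.sort s') i := by
  set σ := Tuple.sort s
  set σ' := Tuple.sort s'
  obtain ⟨j, hj, hij⟩ : ∃ j : Fin N, j ≤ i ∧ i ≤ σ.symm (σ' j) := by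
    by_contra hcon
    push_neg at hcon
    have hsub : (Finset.Iic i).image (fun j => σ.symm (σ' j)) ⊆ Finset.Iio i := by
      intro x hx
      simp only [Finset.mem_image, Finset.mem_Iic] at hx
      obtain ⟨j, hj, rfl⟩ := hx
      exact Finset.mem_Iio.2 (hcon j hj)
    have hcard := Finset.card_le_card hsub
    rw [Finset.card_image_of_injective _ (fun a b hab => σ'.injective (σ.symm.injective hab)),
      Fin.card_Iic, Fin.card_Iio] at hcard
    omega
  calc (s ∘ σ) i ≤ (s ∘ σ) (σ.symm (σ' j)) := Tuple.monotone_sort s hij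
    _ = s (σ' j) := by simp
    _ ≤ s' (σ' j) := h _
    _ = (s' ∘ σ') j := rfl
    _ ≤ (s' ∘ σ') i := Tuple.monotone_sort s' hj

lemma ostat_mono {N : ℕ} {s s' : Fin N → ℝ} (h : ∀ t, s t ≤ s' t) (k : ℕ) :
    ostat s k ≤ ostat s' k := by
  unfold ostat
  split_ifs with hk
  · exact sorted_pointwise_le h _
  · exact le_rfl

lemma quad_eq {ι κ : Type*} [Fintype ι] [Fintype κ] (M : Matrix ι ι ℝ)
    (P : Matrix ι κ ℝ) (u : κ → ℝ) :
    (P *ᵥ u) ⬝ᵥ (M *ᵥ (P *ᵥ u)) = u ⬝ᵥ ((Pᵀ * M * P) *ᵥ u) := by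
  rw [mulVec_mulVec, dotProduct_mulVec, vecMul_mulVec, ← dotProduct_mulVec,
    ← Matrix.mul_assoc]

/-- Hierarchical SCP for joint coverage based on ellipsoidal sets:
the reconciled quantile is at most the plain one, and hence the reconciled prediction
ellipsoid has smaller Lebesgue measure, uniformly over centers. -/
theorem stmt0
    (n p : ℕ) (hn : 2 ≤ n) (hp : 1 ≤ p)
    (α : ℝ) (hα : α ∈ Set.Ioo (0 : ℝ) 1)
    (Hsub : Matrix (Fin p) (Fin n) ℝ)
    (H : Matrix (Fin n ⊕ Fin p) (Fin n) ℝ) (hH : H = Matrix.fromRows 1 Hsub)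
    (A : Matrix (Fin n ⊕ Fin p) (Fin n ⊕ Fin p) ℝ) (hA : A.PosDef)
    (PA : Matrix (Fin n ⊕ Fin p) (Fin n ⊕ Fin p) ℝ)
    (hPA : PA = H * (Hᵀ * A * H)⁻¹ * (Hᵀ * A))
    (N : ℕ) (hN : 1 ≤ N)
    (y yhat : Fin N → (Fin n ⊕ Fin p) → ℝ)
    (hy : ∀ t, y t ∈ Set.range H.mulVec)
    (scheck sring : Fin N → ℝ)
    (hscheck : ∀ t, scheck t = anorm A (y t - yhat t))
    (hsring : ∀ t, sring t = anorm A (y t - PA.mulVec (yhat t)))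
    (qcheck qring : EReal)
    (hqcheck : qcheck = ostatE scheck ⌈((N : ℝ) + 1) * (1 - α)⌉₊)
    (hqring : qring = ostatE sring ⌈((N : ℝ) + 1) * (1 - α)⌉₊) :
    qring ≤ qcheck ∧
      ∀ c c' : (Fin n ⊕ Fin p) → ℝ,
        volume {v : (Fin n ⊕ Fin p) → ℝ | (anorm A (v - c) : EReal) ≤ qring} ≤
          volume {v : (Fin n ⊕ Fin p) → ℝ | (anorm A (v - c') : EReal) ≤ qcheck} := by
  have hAT : Aᵀ = A := by
    have := hA.1
    rwa [Matrix.IsHermitian, conjTranspose_eq_transpose_of_trivial] at this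
  set M := Hᵀ * A * H with hM
  -- H has trivial kernel
  have hHinj : ∀ x : Fin n → ℝ, H *ᵥ x = 0 → x = 0 := by
    intro x hx
    funext i
    have := congrFun hx (Sum.inl i)
    rw [hH, fromRows_mulVec] at this
    simpa using this
  have hMpd : M.PosDef := by
    refine Matrix.PosDef.of_dotProduct_mulVec_pos ?_ ?_
    · rw [Matrix.IsHermitian, conjTranspose_eq_transpose_of_trivial, hM,
        Matrix.transpose_mul, Matrix.transpose_mul, hAT, transpose_transpose,
        Matrix.mul_assoc]
    · intro x hx
      rw [star_trivial, hM, ← quad_eq]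
      have hne : H *ᵥ x ≠ 0 := fun h0 => hx (hHinj x h0)
      have := hA.dotProduct_mulVec_pos hne
      rwa [star_trivial] at this
  have hdet : IsUnit M.det := hMpd.det_pos.ne'.isUnit
  have hMinv : M⁻¹ * M = 1 := Matrix.nonsing_inv_mul M hdet
  have hMsym : Mᵀ = M := by
    have := hMpd.1
    rwa [Matrix.IsHermitian, conjTranspose_eq_transpose_of_trivial] at this
  have hMisym : (M⁻¹)ᵀ = M⁻¹ := by rw [Matrix.transpose_nonsing_inv, hMsym]
  have habs : ∀ Z : Matrix (Fin n) (Fin n ⊕ Fin p) ℝ, Hᵀ * (A * (H * Z)) = M * Z := by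
    intro Z; simp only [hM, Matrix.mul_assoc]
  have habs' : Hᵀ * (A * H) = M := by simp only [hM, Matrix.mul_assoc]
  have hPH : PA * H = H := by
    rw [hPA]
    simp only [Matrix.mul_assoc]
    rw [habs', hMinv, Matrix.mul_one]
  have hidem : PA * PA = PA := by
    conv_lhs => rw [hPA]
    conv_rhs => rw [hPA]
    simp only [Matrix.mul_assoc]
    rw [habs, ← Matrix.mul_assoc M⁻¹ M, hMinv, Matrix.one_mul]
  have hsymP : PAᵀ * A = A * PA := by
    rw [hPA]
    rw [Matrix.transpose_mul, Matrix.transpose_mul, Matrix.transpose_mul, hAT,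
      transpose_transpose, hMisym]
    simp only [Matrix.mul_assoc]
  have hPAP : PAᵀ * A * PA = A * PA := by
    rw [hsymP, Matrix.mul_assoc, hidem]
  have hcontr : ∀ u, anorm A (PA *ᵥ u) ≤ anorm A u := by
    intro u
    unfold anorm
    apply Real.sqrt_le_sqrt
    have h0 : 0 ≤ ((1 - PA) *ᵥ u) ⬝ᵥ (A *ᵥ ((1 - PA) *ᵥ u)) := by
      have := hA.posSemidef.dotProduct_mulVec_nonneg ((1 - PA) *ᵥ u)
      rwa [star_trivial] at this
    rw [quad_eq] at h0
    have hexp : (1 - PA)ᵀ * A * (1 - PA) = A - A * PA := by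
      have e : (1 - PA)ᵀ * A * (1 - PA)
          = A - A * PA - (PAᵀ * A - PAᵀ * A * PA) := by
        rw [Matrix.transpose_sub, Matrix.transpose_one]
        noncomm_ring
      rw [e, hPAP, hsymP]
      abel
    rw [hexp, Matrix.sub_mulVec, dotProduct_sub] at h0
    have hq : (PA *ᵥ u) ⬝ᵥ (A *ᵥ (PA *ᵥ u)) = u ⬝ᵥ ((A * PA) *ᵥ u) := by
      rw [quad_eq, hPAP]
    show (PA *ᵥ u) ⬝ᵥ (A *ᵥ (PA *ᵥ u)) ≤ u ⬝ᵥ (A *ᵥ u)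
    rw [hq]
    linarith
  have hpt : ∀ t, sring t ≤ scheck t := by
    intro t
    rw [hsring, hscheck]
    obtain ⟨x, hx⟩ := hy t
    have hyfix : PA *ᵥ (y t) = y t := by
      rw [← hx, mulVec_mulVec, hPH]
    have hre : y t - PA *ᵥ yhat t = PA *ᵥ (y t - yhat t) := by
      rw [Matrix.mulVec_sub, hyfix]
    rw [hre]
    exact hcontr _
  have qle : qring ≤ qcheck := by
    rw [hqring, hqcheck]
    unfold ostatE
    split_ifs with h1 h2
    · exact_mod_cast ostat_mono hpt _
    · exact le_refl ⊥
    · exact le_refl ⊤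
  refine ⟨qle, fun c c' => ?_⟩
  have hset : {v : (Fin n ⊕ Fin p) → ℝ | (anorm A (v - c) : EReal) ≤ qring}
      = (fun v => v + (c' - c)) ⁻¹'
        {v : (Fin n ⊕ Fin p) → ℝ | (anorm A (v - c') : EReal) ≤ qring} := by
    ext v
    simp only [Set.mem_setOf_eq, Set.mem_preimage]
    have : v + (c' - c) - c' = v - c := by abel
    rw [this]
  rw [hset, measure_preimage_add_right]
  exact measure_mono (fun v hv => le_trans hv qle)
end

section
/- Fix α ∈ (0,1) and N ≥ 1. Let s_1,…,s_N,s_{N+1} be i.i.d. nonnegative real random variables (non-conformity scores), and let q = s_{(⌈(N+1)(1−α)⌉)} be the ⌈(N+1)(1−α)⌉-th order statistic of s_1,…,s_N, with the convention that the (N+1)-th order statistic equals +∞. Then P(s_{N+1} ≤ q) ≥ 1 − α. If moreover the s_1,…,s_{N+1} are almost surely pairwise distinct, then P(s_{N+1} ≤ q) ≤ 1 − α + 1/(N+1). -/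
open MeasureTheory ProbabilityTheory Matrix
open scoped ENNReal

namespace ConformalAux

open Finset

/-- Number of coordinates strictly below `x t`. -/
noncomputable def rk {n : ℕ} (x : Fin n → ℝ) (t : Fin n) : ℕ :=
  (Finset.univ.filter (fun u => x u < x t)).card

lemma card_filter_comp_perm {n : ℕ} (σ : Equiv.Perm (Fin n)) (p : Fin n → Prop)
    [DecidablePred p] :
    (Finset.univ.filter fun i => p (σ i)).card = (Finset.univ.filter p).card := by
  refine Finset.card_equiv σ (fun i => ?_)
  simp

lemma rk_comp_perm {n : ℕ} (x : Fin n → ℝ) (σ : Equiv.Perm (Fin n)) (t : Fin n) :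
    rk (fun u => x (σ u)) t = rk x (σ t) := by
  unfold rk
  exact card_filter_comp_perm σ (fun v => x v < x (σ t))

lemma le_sorted_iff {n : ℕ} {g : Fin n → ℝ} (hg : Monotone g) {k : ℕ}
    (hk1 : 1 ≤ k) (hkn : k ≤ n) (x : ℝ) :
    x ≤ g ⟨k - 1, by omega⟩ ↔ (Finset.univ.filter fun j => g j < x).card < k := by
  set j₀ : Fin n := ⟨k - 1, by omega⟩ with hj₀
  constructor
  · intro h
    have hsub : (Finset.univ.filter fun j => g j < x) ⊆ Finset.Iio j₀ := by
      intro j hj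
      simp only [Finset.mem_filter] at hj
      rw [Finset.mem_Iio]
      by_contra hc
      push_neg at hc
      exact absurd (le_trans h (hg hc)) (not_le.2 hj.2)
    have := Finset.card_le_card hsub
    rw [Fin.card_Iio] at this
    have hv : (j₀ : ℕ) = k - 1 := rfl
    omega
  · intro h
    by_contra hc
    push_neg at hc
    have hsub : Finset.Iic j₀ ⊆ Finset.univ.filter fun j => g j < x := by
      intro j hj
      rw [Finset.mem_Iic] at hj
      exact Finset.mem_filter.2 ⟨Finset.mem_univ _, lt_of_le_of_lt (hg hj) hc⟩
    have := Finset.card_le_card hsub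
    rw [Fin.card_Iic] at this
    have hv : (j₀ : ℕ) = k - 1 := rfl
    omega

lemma le_ostat_iff {N : ℕ} (s : Fin N → ℝ) {k : ℕ} (hk1 : 1 ≤ k) (hkN : k ≤ N) (x : ℝ) :
    x ≤ ostat s k ↔ (Finset.univ.filter fun i => s i < x).card < k := by
  rw [ostat, dif_pos ⟨hk1, hkN⟩,
    le_sorted_iff (Tuple.monotone_sort s) hk1 hkN x]
  have := card_filter_comp_perm (Tuple.sort s) (fun i => s i < x)
  simp only [Function.comp] at this ⊢
  rw [this]

lemma k_le_card_rk_lt {n k : ℕ} (x : Fin n → ℝ) (hk1 : 1 ≤ k) (hkn : k ≤ n) :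
    k ≤ (Finset.univ.filter fun t => rk x t < k).card := by
  set σ := Tuple.sort x with hσ
  have hmono : Monotone (x ∘ σ) := Tuple.monotone_sort x
  set j₀ : Fin n := ⟨k - 1, by omega⟩ with hj₀
  have hsub : (Finset.Iic j₀).image σ ⊆ Finset.univ.filter fun t => rk x t < k := by
    intro t ht
    simp only [Finset.mem_image, Finset.mem_Iic] at ht
    obtain ⟨j, hj, rfl⟩ := ht
    refine Finset.mem_filter.2 ⟨Finset.mem_univ _, ?_⟩
    have heq : rk x (σ j) = (Finset.univ.filter fun i => x (σ i) < x (σ j)).card :=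
      (card_filter_comp_perm σ (fun u => x u < x (σ j))).symm
    have hsub2 : (Finset.univ.filter fun i => x (σ i) < x (σ j)) ⊆ Finset.Iio j := by
      intro i hi
      simp only [Finset.mem_filter] at hi
      rw [Finset.mem_Iio]
      by_contra hc
      push_neg at hc
      exact absurd (hmono hc) (not_le.2 hi.2)
    have h2 := Finset.card_le_card hsub2
    rw [Fin.card_Iio] at h2
    have hjv : (j : ℕ) ≤ k - 1 := hj
    rw [rk] at heq ⊢
    omega
  have := Finset.card_le_card hsub
  rw [Finset.card_image_of_injective _ σ.injective, Fin.card_Iic] at this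
  have hv : (j₀ : ℕ) = k - 1 := rfl
  omega

lemma card_rk_lt_of_inj {n k : ℕ} {x : Fin n → ℝ} (hinj : Function.Injective x)
    (hk1 : 1 ≤ k) (hkn : k ≤ n) :
    (Finset.univ.filter fun t => rk x t < k).card = k := by
  set σ := Tuple.sort x with hσ
  have hmono : Monotone (x ∘ σ) := Tuple.monotone_sort x
  have hsm : StrictMono (x ∘ σ) :=
    hmono.strictMono_of_injective (hinj.comp σ.injective)
  have hrk : ∀ t : Fin n, rk x t = (σ.symm t : ℕ) := by
    intro t
    have h1 : rk x t = rk (fun u => x (σ u)) (σ.symm t) := by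
      rw [rk_comp_perm x σ (σ.symm t), Equiv.apply_symm_apply]
    rw [h1, rk]
    have : (Finset.univ.filter fun u => x (σ u) < x (σ (σ.symm t))) =
        Finset.Iio (σ.symm t) := by
      ext i
      simp only [Finset.mem_filter, Finset.mem_univ, true_and, Finset.mem_Iio]
      exact hsm.lt_iff_lt
    rw [this, Fin.card_Iio]
  have : (Finset.univ.filter fun t => rk x t < k) =
      Finset.univ.filter fun t => ((σ.symm t : ℕ) < k) := by
    ext t; simp [hrk t]
  rw [this, card_filter_comp_perm σ.symm (fun j : Fin n => (j : ℕ) < k)]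
  have : (Finset.univ.filter fun j : Fin n => (j : ℕ) < k) =
      Finset.Iic (⟨k - 1, by omega⟩ : Fin n) := by
    ext j
    simp only [Finset.mem_filter, Finset.mem_univ, true_and, Finset.mem_Iic, Fin.le_def]
    omega
  rw [this, Fin.card_Iic]
  have hv : ((⟨k - 1, by omega⟩ : Fin n) : ℕ) = k - 1 := rfl
  omega

lemma event_iff {N : ℕ} (x : Fin (N + 1) → ℝ) {k : ℕ} (hk1 : 1 ≤ k) (hkN : k ≤ N + 1) :
    ((x (Fin.last N) : EReal) ≤ ostatE (fun i : Fin N => x i.castSucc) k)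
      ↔ rk x (Fin.last N) < k := by
  have hcount : rk x (Fin.last N)
      = (Finset.univ.filter fun i : Fin N => x i.castSucc < x (Fin.last N)).card := by
    rw [rk]
    have himg : (Finset.univ.filter fun u : Fin (N + 1) => x u < x (Fin.last N))
        = (Finset.univ.filter fun i : Fin N => x i.castSucc < x (Fin.last N)).image
            Fin.castSucc := by
      ext u
      simp only [Finset.mem_filter, Finset.mem_univ, true_and, Finset.mem_image]
      constructor
      · intro hu
        by_cases hlast : u = Fin.last N
        · rw [hlast] at hu; exact absurd hu (lt_irrefl _)
        · have hval : (u : ℕ) < N := by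
            have := u.isLt
            rcases Nat.lt_or_ge (u : ℕ) N with h | h
            · exact h
            · exact absurd (Fin.ext (by omega : (u : ℕ) = N)) hlast
          have hcast : ((⟨(u : ℕ), hval⟩ : Fin N)).castSucc = u := by
            ext; simp
          exact ⟨⟨(u : ℕ), hval⟩, by rw [hcast]; exact hu, hcast⟩
      · rintro ⟨i, hi, rfl⟩; exact hi
    rw [himg, Finset.card_image_of_injective _ (Fin.castSucc_injective N)]
  rcases Nat.lt_or_ge N k with h | h
  · -- k = N + 1
    have hk : k = N + 1 := by omega
    rw [ostatE, if_neg (by omega), if_neg (by omega)]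
    simp only [le_top, true_iff]
    rw [hcount]
    have hle := Finset.card_filter_le (Finset.univ : Finset (Fin N))
      (fun i => x i.castSucc < x (Fin.last N))
    simp only [Finset.card_univ, Fintype.card_fin] at hle
    omega
  · -- 1 ≤ k ≤ N
    rw [ostatE, if_pos ⟨hk1, h⟩, EReal.coe_le_coe_iff,
      le_ostat_iff (fun i : Fin N => x i.castSucc) hk1 h (x (Fin.last N)), hcount]

lemma measurable_rk {n : ℕ} (t : Fin n) {k : ℕ} :
    MeasurableSet {y : Fin n → ℝ | rk y t < k} := by
  have hmeas : Measurable fun y : Fin n → ℝ => rk y t := by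
    have : (fun y : Fin n → ℝ => rk y t) =
        fun y => ∑ u : Fin n, if y u < y t then 1 else 0 := by
      funext y
      rw [rk, Finset.card_filter]
    rw [this]
    refine Finset.measurable_sum _ (fun u _ => ?_)
    exact Measurable.ite (measurableSet_lt (measurable_pi_apply u) (measurable_pi_apply t))
      measurable_const measurable_const
  exact hmeas (MeasurableSet.of_discrete (s := {m : ℕ | m < k}))

end ConformalAux

open ConformalAux Finset

/-- Coverage guarantee of split conformal prediction with a scalar
nonnegative non-conformity score: lower bound `1 - α`, and upper bound
`1 - α + 1/(N+1)` when the scores are a.s. pairwise distinct. -/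
theorem stmt1 {Ω : Type*} [MeasurableSpace Ω] (μ : Measure Ω) [IsProbabilityMeasure μ]
    (α : ℝ) (hα : α ∈ Set.Ioo (0 : ℝ) 1) (N : ℕ) (hN : 1 ≤ N)
    (s : Fin (N + 1) → Ω → ℝ)
    (hmeas : ∀ t, Measurable (s t))
    (hnonneg : ∀ t ω, 0 ≤ s t ω)
    (hindep : iIndepFun s μ)
    (hident : ∀ t t', IdentDistrib (s t) (s t') μ μ)
    (q : Ω → EReal)
    (hq : ∀ ω, q ω = ostatE (fun t : Fin N => s t.castSucc ω) ⌈((N : ℝ) + 1) * (1 - α)⌉₊) :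
    ENNReal.ofReal (1 - α) ≤ μ {ω | (s (Fin.last N) ω : EReal) ≤ q ω} ∧
      ((∀ᵐ ω ∂μ, ∀ t t', t ≠ t' → s t ω ≠ s t' ω) →
        μ {ω | (s (Fin.last N) ω : EReal) ≤ q ω} ≤
          ENNReal.ofReal (1 - α + 1 / ((N : ℝ) + 1))) := by
  obtain ⟨hα0, hα1⟩ := hα
  set k : ℕ := ⌈((N : ℝ) + 1) * (1 - α)⌉₊ with hk_def
  have hx_pos : (0 : ℝ) < ((N : ℝ) + 1) * (1 - α) := by
    have : (0 : ℝ) < (N : ℝ) + 1 := by positivity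
    nlinarith
  have hk1 : 1 ≤ k := Nat.one_le_ceil_iff.2 hx_pos
  have hkN : k ≤ N + 1 := by
    rw [hk_def]
    refine Nat.ceil_le.2 ?_
    push_cast
    nlinarith
  have hk_le : ((N : ℝ) + 1) * (1 - α) ≤ (k : ℝ) := Nat.le_ceil _
  have hk_lt : (k : ℝ) < ((N : ℝ) + 1) * (1 - α) + 1 := Nat.ceil_lt_add_one hx_pos.le
  -- the joint map
  set f : Ω → (Fin (N + 1) → ℝ) := fun ω t => s t ω with hf_def
  have hf : Measurable f := measurable_pi_lambda _ (fun t => hmeas t)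
  set π : Measure (Fin (N + 1) → ℝ) := μ.map f with hπ_def
  haveI : ∀ t, IsProbabilityMeasure (μ.map (s t)) :=
    fun t => Measure.isProbabilityMeasure_map (hmeas t).aemeasurable
  -- joint law is the product measure
  have hpi : π = Measure.pi (fun _ : Fin (N + 1) => μ.map (s (Fin.last N))) := by
    have h1 : π = Measure.pi (fun t => μ.map (s t)) := by
      refine (Measure.pi_eq fun E hE => ?_).symm
      rw [hπ_def, Measure.map_apply hf (MeasurableSet.univ_pi hE)]
      have hpre : f ⁻¹' Set.pi Set.univ E = ⋂ t, s t ⁻¹' E t := by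
        ext ω
        simp [hf_def, Set.mem_pi]
      rw [hpre]
      have h2 := hindep.measure_inter_preimage_eq_mul (S := Finset.univ)
        (sets := E) (fun i _ => hE i)
      simp only [Finset.mem_univ, Set.iInter_true, Set.iInter_iInter_eq_left] at h2
      rw [h2]
      refine Finset.prod_congr rfl (fun t _ => ?_)
      rw [Measure.map_apply (hmeas t) (hE t)]
    rw [h1]
    congr 1
    funext t
    exact (hident t (Fin.last N)).map_eq
  haveI : IsProbabilityMeasure π := by
    rw [hπ_def]; exact Measure.isProbabilityMeasure_map hf.aemeasurable
  -- the events
  set A : Fin (N + 1) → Set (Fin (N + 1) → ℝ) := fun t => {y | rk y t < k} with hA_def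
  have hA : ∀ t, MeasurableSet (A t) := fun t => measurable_rk t
  -- exchangeability : all events have the same probability
  have hperm : ∀ t, π (A t) = π (A (Fin.last N)) := by
    intro t
    set e : Equiv.Perm (Fin (N + 1)) := Equiv.swap t (Fin.last N) with he_def
    have hmp : MeasurePreserving (MeasurableEquiv.piCongrLeft (fun _ => ℝ) e) π π := by
      rw [hpi]
      exact MeasureTheory.measurePreserving_piCongrLeft
        (fun _ : Fin (N + 1) => μ.map (s (Fin.last N))) e
    have hT : ∀ y : Fin (N + 1) → ℝ,
        (MeasurableEquiv.piCongrLeft (fun _ => ℝ) e) y = fun j => y (e.symm j) := by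
      intro y
      funext j
      conv_lhs => rw [show j = e (e.symm j) by simp]
      rw [MeasurableEquiv.piCongrLeft_apply_apply]
    have hpre : (MeasurableEquiv.piCongrLeft (fun _ => ℝ) e) ⁻¹' (A t)
        = A (Fin.last N) := by
      ext y
      simp only [Set.mem_preimage, hA_def, Set.mem_setOf_eq, hT y]
      rw [show (fun j => y (e.symm j)) = (fun j => y (e.symm j)) from rfl]
      have : rk (fun j => y (e.symm j)) t = rk y (e.symm t) :=
        rk_comp_perm y e.symm t
      rw [this]
      have : e.symm t = Fin.last N := by
        rw [he_def]; simp [Equiv.swap_apply_left]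
      rw [this]
    calc π (A t) = π ((MeasurableEquiv.piCongrLeft (fun _ => ℝ) e) ⁻¹' (A t)) :=
          (hmp.measure_preimage (hA t).nullMeasurableSet).symm
      _ = π (A (Fin.last N)) := by rw [hpre]
  -- sum of indicators
  have hsum : ∑ t : Fin (N + 1), π (A t)
      = ∫⁻ y, ((Finset.univ.filter fun t : Fin (N + 1) => rk y t < k).card : ℝ≥0∞) ∂π := by
    have h1 : ∀ t : Fin (N + 1), π (A t) = ∫⁻ y, Set.indicator (A t) (fun _ => 1) y ∂π :=
      fun t => (lintegral_indicator_one (hA t)).symm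
    simp_rw [h1]
    rw [← lintegral_finset_sum _ (fun t _ =>
      (measurable_const.indicator (hA t) : Measurable _))]
    refine lintegral_congr (fun y => ?_)
    rw [Finset.card_filter]
    push_cast
    refine Finset.sum_congr rfl (fun t _ => ?_)
    by_cases ht : rk y t < k
    · rw [Set.indicator_of_mem (by simpa [hA_def] using ht), if_pos ht]
    · rw [Set.indicator_of_notMem (by simpa [hA_def] using ht), if_neg ht]
  have hsum_const : ∑ t : Fin (N + 1), π (A t) = (N + 1 : ℕ) * π (A (Fin.last N)) := by
    rw [Finset.sum_congr rfl (fun t _ => hperm t)]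
    simp [Finset.sum_const, mul_comm]
  -- the event in Ω equals the preimage
  have hset : {ω | (s (Fin.last N) ω : EReal) ≤ q ω} = f ⁻¹' (A (Fin.last N)) := by
    ext ω
    simp only [Set.mem_setOf_eq, Set.mem_preimage, hA_def, Set.mem_setOf_eq]
    rw [hq ω]
    exact event_iff (f ω) hk1 hkN
  have hμπ : μ {ω | (s (Fin.last N) ω : EReal) ≤ q ω} = π (A (Fin.last N)) := by
    rw [hset, hπ_def, Measure.map_apply hf (hA (Fin.last N))]
  -- lower bound
  have hlow : (k : ℝ≥0∞) ≤ (N + 1 : ℕ) * π (A (Fin.last N)) := by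
    rw [← hsum_const, hsum]
    calc (k : ℝ≥0∞) = ∫⁻ _, (k : ℝ≥0∞) ∂π := by simp
      _ ≤ _ := by
          refine lintegral_mono (fun y => ?_)
          show (k : ℝ≥0∞) ≤ _
          exact_mod_cast Nat.cast_le.2 (k_le_card_rk_lt y hk1 hkN)
  have hNne : ((N + 1 : ℕ) : ℝ≥0∞) ≠ 0 := by simp
  have hNnt : ((N + 1 : ℕ) : ℝ≥0∞) ≠ ⊤ := by simp
  constructor
  · -- lower bound
    rw [hμπ]
    rw [← ENNReal.mul_le_mul_iff_left hNne hNnt]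
    calc ENNReal.ofReal (1 - α) * ((N + 1 : ℕ) : ℝ≥0∞)
        = ENNReal.ofReal ((1 - α) * ((N : ℝ) + 1)) := by
          rw [ENNReal.ofReal_mul (by linarith)]
          congr 1
          rw [← ENNReal.ofReal_natCast (N + 1)]
          congr 1
          push_cast
          ring
      _ ≤ (k : ℝ≥0∞) := by
          rw [← ENNReal.ofReal_natCast k]
          exact ENNReal.ofReal_le_ofReal (by linarith [hk_le])
      _ ≤ π (A (Fin.last N)) * ((N + 1 : ℕ) : ℝ≥0∞) := by
          rw [mul_comm]; exact hlow
  · -- upper bound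
    intro hdist
    set D : Set (Fin (N + 1) → ℝ) := {y | Function.Injective y} with hD_def
    have hDmeas : MeasurableSet D := by
      have : D = ⋂ (t : Fin (N + 1)) (t' : Fin (N + 1)),
          {y : Fin (N + 1) → ℝ | t ≠ t' → y t ≠ y t'} := by
        ext y
        simp only [hD_def, Set.mem_setOf_eq, Set.mem_iInter]
        constructor
        · intro hy t t' htt' h
          exact htt' (hy h)
        · intro hy a b hab
          by_contra hc
          exact hy a b hc hab
      rw [this]
      refine MeasurableSet.iInter (fun t => MeasurableSet.iInter (fun t' => ?_))
      by_cases htt' : t = t'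
      · simp [htt']
      · have : {y : Fin (N + 1) → ℝ | t ≠ t' → y t ≠ y t'}
            = {y : Fin (N + 1) → ℝ | y t = y t'}ᶜ := by
          ext y; simp [htt']
        rw [this]
        exact (measurableSet_eq_fun (measurable_pi_apply t) (measurable_pi_apply t')).compl
    have hDae : ∀ᵐ y ∂π, y ∈ D := by
      rw [hπ_def]
      refine (ae_map_iff hf.aemeasurable hDmeas).2 ?_
      filter_upwards [hdist] with ω hω
      intro a b hab
      by_contra hc
      exact hω a b hc hab
    have hsum_eq : ∑ t : Fin (N + 1), π (A t) = (k : ℝ≥0∞) := by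
      rw [hsum]
      have : ∫⁻ y, ((Finset.univ.filter fun t : Fin (N + 1) => rk y t < k).card : ℝ≥0∞) ∂π
          = ∫⁻ _, (k : ℝ≥0∞) ∂π := by
        refine lintegral_congr_ae ?_
        filter_upwards [hDae] with y hy
        rw [card_rk_lt_of_inj hy hk1 hkN]
      rw [this]; simp
    have hup : (N + 1 : ℕ) * π (A (Fin.last N)) = (k : ℝ≥0∞) := by
      rw [← hsum_const, hsum_eq]
    rw [hμπ, ← ENNReal.mul_le_mul_iff_left hNne hNnt]
    calc π (A (Fin.last N)) * ((N + 1 : ℕ) : ℝ≥0∞)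
        = (k : ℝ≥0∞) := by rw [mul_comm]; exact hup
      _ ≤ ENNReal.ofReal (1 - α + 1 / ((N : ℝ) + 1)) * ((N + 1 : ℕ) : ℝ≥0∞) := by
          rw [← ENNReal.ofReal_natCast k,
            show ((N + 1 : ℕ) : ℝ≥0∞) = ENNReal.ofReal ((N : ℝ) + 1) by
              rw [← ENNReal.ofReal_natCast (N + 1)]; congr 1; push_cast; ring,
            ← ENNReal.ofReal_mul (by
              have h1 : (0 : ℝ) < (N : ℝ) + 1 := by positivity
              have h2 : (0 : ℝ) < 1 / ((N : ℝ) + 1) := by positivity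
              nlinarith)]
          refine ENNReal.ofReal_le_ofReal ?_
          have hNpos : (0 : ℝ) < (N : ℝ) + 1 := by positivity
          have hexp : (1 - α + 1 / ((N : ℝ) + 1)) * ((N : ℝ) + 1)
              = ((N : ℝ) + 1) * (1 - α) + 1 := by
            field_simp
          rw [hexp]
          linarith [hk_lt]
end

section
/- Fix α ∈ (0,1) and N ≥ 1. Let s̃_1,…,s̃_N,s̃_{N+1} be i.i.d. random vectors with values in ℝ^m. For each component i ∈ {1,…,m}, let s̃_{(1),i} ≤ … ≤ s̃_{(N),i} be the order statistics of the i-th components s̃_{1,i},…,s̃_{N,i}, with the conventions s̃_{(0),i} = −∞ and s̃_{(N+1),i} = +∞. Then for every i ∈ {1,…,m}, P( s̃_{(⌊(N+1)α/2⌋),i} ≤ s̃_{N+1,i} ≤ s̃_{(⌈(N+1)(1−α/2)⌉),i} ) ≥ 1 − α. If moreover, for each i, the values s̃_{1,i},…,s̃_{N+1,i} are almost surely pairwise distinct, then for every i ∈ {1,…,m}, P( s̃_{(⌊(N+1)α/2⌋),i} ≤ s̃_{N+1,i} ≤ s̃_{(⌈(N+1)(1−α/2)⌉),i} ) ≤ 1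 − α + 2/(N+1). -/
open MeasureTheory ProbabilityTheory Matrix
open scoped ENNReal

set_option linter.unusedSectionVars false
set_option maxHeartbeats 1000000
section Helpers
open Finset

section Counting
variable {n : ℕ}

/-- number of entries `< x t` -/
noncomputable def cntLT (x : Fin n → ℝ) (t : Fin n) : ℕ := (univ.filter fun u => x u < x t).card
/-- number of entries `≤ x t` -/
noncomputable def cntLE (x : Fin n → ℝ) (t : Fin n) : ℕ := (univ.filter fun u => x u ≤ x t).card

lemma cntLT_sort_le (x : Fin n → ℝ) (j : Fin n) : cntLT x (Tuple.sort x j) ≤ (j : ℕ) := by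
  classical
  have hsub : (univ.filter fun u => x u < x (Tuple.sort x j)) ⊆
      (univ.filter fun i : Fin n => i < j).image (Tuple.sort x) := by
    intro u hu
    simp only [mem_filter, mem_univ, true_and] at hu
    have : u = Tuple.sort x ((Tuple.sort x).symm u) := by simp
    rw [this] at hu ⊢
    refine mem_image_of_mem _ ?_
    simp only [mem_filter, mem_univ, true_and]
    by_contra h
    exact absurd (Tuple.monotone_sort x (le_of_not_gt h)) (not_le.2 hu)
  calc cntLT x (Tuple.sort x j) ≤ ((univ.filter fun i : Fin n => i < j).image (Tuple.sort x)).card :=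
        card_le_card hsub
    _ ≤ (univ.filter fun i : Fin n => i < j).card := card_image_le
    _ = (j : ℕ) := by rw [show (univ.filter fun i : Fin n => i < j) = Finset.Iio j by ext i; simp, Fin.card_Iio]

lemma le_cntLE_sort (x : Fin n → ℝ) (j : Fin n) : (j : ℕ) + 1 ≤ cntLE x (Tuple.sort x j) := by
  classical
  have hsub : (univ.filter fun i : Fin n => i ≤ j).image (Tuple.sort x) ⊆
      (univ.filter fun u => x u ≤ x (Tuple.sort x j)) := by
    intro u hu
    simp only [mem_image, mem_filter, mem_univ, true_and] at hu
    obtain ⟨i, hij, rfl⟩ := hu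
    simp only [mem_filter, mem_univ, true_and]
    exact Tuple.monotone_sort x hij
  calc (j : ℕ) + 1 = (univ.filter fun i : Fin n => i ≤ j).card := by
        rw [show (univ.filter fun i : Fin n => i ≤ j) = Finset.Iic j by ext i; simp, Fin.card_Iic]
    _ = ((univ.filter fun i : Fin n => i ≤ j).image (Tuple.sort x)).card :=
        (card_image_of_injective _ (Tuple.sort x).injective).symm
    _ ≤ _ := card_le_card hsub

lemma cntLT_sort_eq (x : Fin n → ℝ) (hx : Function.Injective x) (j : Fin n) :
    cntLT x (Tuple.sort x j) = (j : ℕ) := by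
  classical
  refine le_antisymm (cntLT_sort_le x j) ?_
  have hsub : (univ.filter fun i : Fin n => i < j).image (Tuple.sort x) ⊆
      (univ.filter fun u => x u < x (Tuple.sort x j)) := by
    intro u hu
    simp only [mem_image, mem_filter, mem_univ, true_and] at hu
    obtain ⟨i, hij, rfl⟩ := hu
    simp only [mem_filter, mem_univ, true_and]
    refine lt_of_le_of_ne (Tuple.monotone_sort x hij.le) ?_
    exact fun h => hij.ne ((Tuple.sort x).injective (hx h))
  calc (j : ℕ) = (univ.filter fun i : Fin n => i < j).card := by
        rw [show (univ.filter fun i : Fin n => i < j) = Finset.Iio j by ext i; simp, Fin.card_Iio]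
    _ = ((univ.filter fun i : Fin n => i < j).image (Tuple.sort x)).card :=
        (card_image_of_injective _ (Tuple.sort x).injective).symm
    _ ≤ _ := card_le_card hsub

lemma card_filter_val_lt_le (k : ℕ) : (univ.filter fun j : Fin n => (j : ℕ) < k).card ≤ k := by
  classical
  have := card_le_card_of_injOn (s := univ.filter fun j : Fin n => (j : ℕ) < k)
    (t := Finset.range k) (fun j => (j : ℕ)) (fun j hj => Finset.mem_range.2 (mem_filter.1 hj).2)
    (fun a _ b _ h => Fin.val_injective h)
  simpa using this

lemma card_filter_val_lt (k : ℕ) (hk : k ≤ n) :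
    (univ.filter fun j : Fin n => (j : ℕ) < k).card = k := by
  classical
  have : (univ.filter fun j : Fin n => (j : ℕ) < k) =
      (Finset.range k).attachFin (fun m hm => lt_of_lt_of_le (Finset.mem_range.1 hm) hk) := by
    ext j; simp [Finset.mem_attachFin]
  rw [this, Finset.card_attachFin, card_range]

lemma card_cntLE_le (x : Fin n → ℝ) (k : ℕ) :
    (univ.filter fun t => cntLE x t ≤ k).card ≤ k := by
  classical
  have hsub : (univ.filter fun t => cntLE x t ≤ k) ⊆
      (univ.filter fun j : Fin n => (j : ℕ) < k).image (Tuple.sort x) := by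
    intro t ht
    simp only [mem_filter, mem_univ, true_and] at ht
    have : t = Tuple.sort x ((Tuple.sort x).symm t) := by simp
    rw [this] at ht ⊢
    refine mem_image_of_mem _ ?_
    simp only [mem_filter, mem_univ, true_and]
    have := le_cntLE_sort x ((Tuple.sort x).symm t)
    omega
  calc _ ≤ ((univ.filter fun j : Fin n => (j : ℕ) < k).image (Tuple.sort x)).card :=
        card_le_card hsub
    _ ≤ (univ.filter fun j : Fin n => (j : ℕ) < k).card := card_image_le
    _ ≤ k := card_filter_val_lt_le k

lemma card_lt_cntLT_le (x : Fin n → ℝ) (k : ℕ) (hk : k ≤ n) :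
    (univ.filter fun t => k ≤ cntLT x t).card ≤ n - k := by
  classical
  have hsub : (univ.filter fun j : Fin n => (j : ℕ) < k).image (Tuple.sort x) ⊆
      (univ.filter fun t => cntLT x t < k) := by
    intro t ht
    simp only [mem_image, mem_filter, mem_univ, true_and] at ht
    obtain ⟨j, hj, rfl⟩ := ht
    simp only [mem_filter, mem_univ, true_and]
    exact lt_of_le_of_lt (cntLT_sort_le x j) hj
  have hcard : k ≤ (univ.filter fun t => cntLT x t < k).card := by
    calc k = ((univ.filter fun j : Fin n => (j : ℕ) < k).image (Tuple.sort x)).card := by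
          rw [card_image_of_injective _ (Tuple.sort x).injective, card_filter_val_lt k hk]
      _ ≤ _ := card_le_card hsub
  have hsplit := card_filter_add_card_filter_not (s := (univ : Finset (Fin n)))
      (p := fun t => cntLT x t < k)
  simp only [not_lt, card_univ, Fintype.card_fin] at hsplit
  have : (univ.filter fun t => k ≤ cntLT x t).card =
      (univ.filter fun t => ¬ (cntLT x t < k)).card := by simp [not_lt]
  omega

lemma card_cntLT_lt_eq (x : Fin n → ℝ) (hx : Function.Injective x) (k : ℕ) (hk : k ≤ n) :
    (univ.filter fun t => cntLT x t < k).card = k := by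
  classical
  have himg : (univ.filter fun t => cntLT x t < k) =
      (univ.filter fun j : Fin n => (j : ℕ) < k).image (Tuple.sort x) := by
    ext t
    simp only [mem_image, mem_filter, mem_univ, true_and]
    constructor
    · intro ht
      refine ⟨(Tuple.sort x).symm t, ?_, by simp⟩
      have := cntLT_sort_eq x hx ((Tuple.sort x).symm t)
      simp only [Equiv.apply_symm_apply] at this
      omega
    · rintro ⟨j, hj, rfl⟩
      rw [cntLT_sort_eq x hx j]; exact hj
  rw [himg, card_image_of_injective _ (Tuple.sort x).injective, card_filter_val_lt k hk]

end Counting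

lemma ostatE_le_iff {N : ℕ} (s : Fin N → ℝ) (y : ℝ) (k : ℕ) (hk : k ≤ N) :
    ostatE s k ≤ (y : EReal) ↔ k ≤ (univ.filter fun t => s t ≤ y).card := by
  rcases Nat.eq_zero_or_pos k with rfl | hk1
  · simp [ostatE]
  · have hcond : 1 ≤ k ∧ k ≤ N := ⟨hk1, hk⟩
    set j : Fin N := ⟨k - 1, by omega⟩ with hj
    have hval : ostatE s k = ((s (Tuple.sort s j) : ℝ) : EReal) := by
      rw [ostatE, if_pos hcond, ostat, dif_pos hcond]; rfl
    rw [hval, EReal.coe_le_coe_iff]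
    constructor
    · intro h
      have h1 := le_cntLE_sort s j
      have := card_le_card (show (univ.filter fun u => s u ≤ s (Tuple.sort s j)) ⊆
          (univ.filter fun t => s t ≤ y) by
        intro u hu; simp only [mem_filter, mem_univ, true_and] at hu ⊢; exact le_trans hu h)
      unfold cntLE at h1
      have hjv : (j : ℕ) = k - 1 := rfl
      omega
    · intro h
      by_contra hy
      push_neg at hy
      have hsub := card_le_card (show (univ.filter fun t => s t ≤ y) ⊆
          (univ.filter fun u => s u < s (Tuple.sort s j)) by
        intro u hu; simp only [mem_filter, mem_univ, true_and] at hu ⊢; exact lt_of_le_of_lt hu hy)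
      have h2 := cntLT_sort_le s j
      unfold cntLT at h2
      have hjv : (j : ℕ) = k - 1 := rfl
      omega

lemma le_ostatE_iff {N : ℕ} (s : Fin N → ℝ) (y : ℝ) (k : ℕ) (hk1 : 1 ≤ k) (hk2 : k ≤ N + 1) :
    (y : EReal) ≤ ostatE s k ↔ (univ.filter fun t => s t < y).card < k := by
  rcases Nat.lt_or_ge N k with hNk | hkN
  · have hcard : (univ.filter fun t => s t < y).card < k :=
      lt_of_le_of_lt (le_trans (card_filter_le _ _) (by simp)) hNk
    have : ostatE s k = ⊤ := by rw [ostatE, if_neg (by omega), if_neg (by omega)]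
    simp [this, hcard, le_top]
  · have hcond : 1 ≤ k ∧ k ≤ N := ⟨hk1, hkN⟩
    set j : Fin N := ⟨k - 1, by omega⟩ with hj
    have hval : ostatE s k = ((s (Tuple.sort s j) : ℝ) : EReal) := by
      rw [ostatE, if_pos hcond, ostat, dif_pos hcond]; rfl
    rw [hval, EReal.coe_le_coe_iff]
    constructor
    · intro h
      have hsub := card_le_card (show (univ.filter fun t => s t < y) ⊆
          (univ.filter fun u => s u < s (Tuple.sort s j)) by
        intro u hu; simp only [mem_filter, mem_univ, true_and] at hu ⊢; exact lt_of_lt_of_le hu h)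
      have h2 := cntLT_sort_le s j
      unfold cntLT at h2
      have hjv : (j : ℕ) = k - 1 := rfl
      omega
    · intro h
      by_contra hy
      push_neg at hy
      have hsub := card_le_card (show (univ.filter fun u => s u ≤ s (Tuple.sort s j)) ⊆
          (univ.filter fun t => s t < y) by
        intro u hu; simp only [mem_filter, mem_univ, true_and] at hu ⊢; exact lt_of_le_of_lt hu hy)
      have h1 := le_cntLE_sort s j
      unfold cntLE at h1
      have hjv : (j : ℕ) = k - 1 := rfl
      omega


section Meas
variable {Ω : Type*} [MeasurableSpace Ω] {μ : Measure Ω} [IsProbabilityMeasure μ] {n : ℕ}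

lemma map_perm_eq_pi (f : Fin n → Ω → ℝ) (hf : ∀ t, Measurable (f t))
    (hindep : iIndepFun f μ)
    (ν : Measure ℝ) [IsProbabilityMeasure ν] (hν : ∀ t, Measure.map (f t) μ = ν)
    (e : Equiv.Perm (Fin n)) :
    Measure.map (fun ω t => f (e t) ω) μ = Measure.pi (fun _ => ν) := by
  refine (Measure.pi_eq fun B hB => ?_).symm
  rw [Measure.map_apply (measurable_pi_lambda _ fun t => hf (e t)) (MeasurableSet.univ_pi hB)]
  have hpre : (fun ω t => f (e t) ω) ⁻¹' (Set.univ.pi B) = ⋂ u, f u ⁻¹' B (e.symm u) := by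
    ext ω
    simp only [Set.mem_preimage, Set.mem_univ_pi, Set.mem_iInter]
    exact ⟨fun h u => by simpa using h (e.symm u), fun h t => by simpa using h (e t)⟩
  rw [hpre]
  have h := hindep.measure_inter_preimage_eq_mul Finset.univ
    (sets := fun u => B (e.symm u)) (fun u _ => hB (e.symm u))
  have hInter : (⋂ u ∈ Finset.univ, f u ⁻¹' B (e.symm u)) = ⋂ u, f u ⁻¹' B (e.symm u) := by
    simp
  rw [← hInter, h]
  have : ∀ u : Fin n, μ (f u ⁻¹' B (e.symm u)) = ν (B (e.symm u)) := fun u => by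
    rw [← hν u, Measure.map_apply (hf u) (hB (e.symm u))]
  simp_rw [this]
  exact Fintype.prod_equiv e.symm (fun u => ν (B (e.symm u))) (fun t => ν (B t))
    (fun u => rfl) |>.trans rfl

lemma measurableSet_nat (K : Set ℕ) : MeasurableSet K := MeasurableSpace.measurableSet_top

lemma measurable_cnt (c : ℝ → ℝ → Prop) [∀ a b : ℝ, Decidable (c a b)]
    (hc : MeasurableSet {p : ℝ × ℝ | c p.1 p.2}) (t : Fin n) :
    Measurable fun x : Fin n → ℝ => ((univ.filter fun u => c (x u) (x t)).card : ℕ) := by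
  have h : ∀ x : Fin n → ℝ, ((univ.filter fun u => c (x u) (x t)).card : ℕ)
      = ∑ u, if c (x u) (x t) then 1 else 0 := fun x => Finset.card_filter _ _
  simp_rw [h]
  refine Finset.measurable_sum _ fun u _ => Measurable.ite ?_ measurable_const measurable_const
  have hm : Measurable fun x : Fin n → ℝ => (x u, x t) :=
    (measurable_pi_apply u).prodMk (measurable_pi_apply t)
  exact hm hc

lemma card_filter_perm (e : Equiv.Perm (Fin n)) (q : Fin n → Prop) [DecidablePred q] :
    (univ.filter fun u => q (e u)).card = (univ.filter q).card := by
  have : (univ.filter fun u => q (e u)) = (univ.filter q).map e.symm.toEmbedding := by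
    ext u
    simp only [mem_filter, mem_univ, true_and, mem_map, Equiv.coe_toEmbedding]
    constructor
    · intro h; exact ⟨e u, h, by simp⟩
    · rintro ⟨a, ha, rfl⟩; simpa using ha
  rw [this, card_map]

lemma measure_cnt_eq (f : Fin n → Ω → ℝ) (hf : ∀ t, Measurable (f t))
    (hindep : iIndepFun f μ)
    (ν : Measure ℝ) [IsProbabilityMeasure ν] (hν : ∀ t, Measure.map (f t) μ = ν)
    (c : ℝ → ℝ → Prop) [∀ a b : ℝ, Decidable (c a b)]
    (hc : MeasurableSet {p : ℝ × ℝ | c p.1 p.2}) (K : Set ℕ) (t t' : Fin n) :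
    μ {ω | ((univ.filter fun u => c (f u ω) (f t ω)).card : ℕ) ∈ K}
      = μ {ω | ((univ.filter fun u => c (f u ω) (f t' ω)).card : ℕ) ∈ K} := by
  classical
  set A : Set (Fin n → ℝ) := {x | ((univ.filter fun u => c (x u) (x t')).card : ℕ) ∈ K} with hA
  have hAm : MeasurableSet A := (measurable_cnt c hc t') (measurableSet_nat K)
  set e : Equiv.Perm (Fin n) := Equiv.swap t' t with he
  have h1 : Measure.map (fun ω u => f (e u) ω) μ = Measure.pi (fun _ => ν) :=
    map_perm_eq_pi f hf hindep ν hν e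
  have h2 : Measure.map (fun ω u => f ((1 : Equiv.Perm (Fin n)) u) ω) μ
      = Measure.pi (fun _ => ν) := map_perm_eq_pi f hf hindep ν hν 1
  have hXm : Measurable fun ω (u : Fin n) => f u ω := measurable_pi_lambda _ hf
  have hX'm : Measurable fun ω (u : Fin n) => f (e u) ω :=
    measurable_pi_lambda _ fun u => hf (e u)
  have key : μ ((fun ω (u : Fin n) => f (e u) ω) ⁻¹' A)
      = μ ((fun ω (u : Fin n) => f u ω) ⁻¹' A) := by
    rw [← Measure.map_apply hX'm hAm, ← Measure.map_apply hXm hAm, h1]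
    rw [show (fun ω (u : Fin n) => f u ω) = (fun ω u => f ((1 : Equiv.Perm (Fin n)) u) ω) from rfl, h2]
  have hpre1 : (fun ω (u : Fin n) => f (e u) ω) ⁻¹' A
      = {ω | ((univ.filter fun u => c (f u ω) (f t ω)).card : ℕ) ∈ K} := by
    ext ω
    simp only [Set.mem_preimage, hA, Set.mem_setOf_eq]
    have h4 : f (e t') ω = f t ω := by rw [he, Equiv.swap_apply_left]
    simp_rw [h4]
    rw [card_filter_perm e (fun u => c (f u ω) (f t ω))]
  have hpre2 : (fun ω (u : Fin n) => f u ω) ⁻¹' A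
      = {ω | ((univ.filter fun u => c (f u ω) (f t' ω)).card : ℕ) ∈ K} := rfl
  rw [← hpre1, ← hpre2, key]

lemma mul_measure_cnt (f : Fin n → Ω → ℝ) (hf : ∀ t, Measurable (f t))
    (hindep : iIndepFun f μ)
    (ν : Measure ℝ) [IsProbabilityMeasure ν] (hν : ∀ t, Measure.map (f t) μ = ν)
    (c : ℝ → ℝ → Prop) [∀ a b : ℝ, Decidable (c a b)]
    (hc : MeasurableSet {p : ℝ × ℝ | c p.1 p.2}) (K : Set ℕ) [DecidablePred (· ∈ K)] (t' : Fin n) :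
    (n : ℝ≥0∞) * μ {ω | ((univ.filter fun u => c (f u ω) (f t' ω)).card : ℕ) ∈ K}
      = ∫⁻ ω, ((univ.filter fun t =>
          ((univ.filter fun u => c (f u ω) (f t ω)).card : ℕ) ∈ K).card : ℝ≥0∞) ∂μ := by
  classical
  set B : Fin n → Set Ω := fun t => {ω | ((univ.filter fun u => c (f u ω) (f t ω)).card : ℕ) ∈ K}
    with hB
  have hBm : ∀ t, MeasurableSet (B t) := by
    intro t
    have : B t = (fun ω (u : Fin n) => f u ω) ⁻¹'
        {x | ((univ.filter fun u => c (x u) (x t)).card : ℕ) ∈ K} := rfl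
    rw [this]
    exact (measurable_pi_lambda _ hf) ((measurable_cnt c hc t) (measurableSet_nat K))
  have hsum : (n : ℝ≥0∞) * μ (B t') = ∑ t : Fin n, μ (B t) := by
    rw [Finset.sum_congr rfl fun t _ => measure_cnt_eq f hf hindep ν hν c hc K t t']
    simp [Finset.sum_const, mul_comm]
    rfl
  show (n : ℝ≥0∞) * μ (B t') = _
  rw [hsum]
  rw [Finset.sum_congr rfl fun t (_ : t ∈ univ) =>
    (lintegral_indicator_one (μ := μ) (hBm t)).symm]
  rw [← lintegral_finset_sum (f := fun t => (B t).indicator (1 : Ω → ℝ≥0∞)) univ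
    (fun t _ => measurable_const.indicator (hBm t))]
  refine lintegral_congr fun ω => ?_
  rw [Finset.card_filter, Nat.cast_sum]
  refine Finset.sum_congr rfl fun t _ => ?_
  by_cases h : ((univ.filter fun u => c (f u ω) (f t ω)).card : ℕ) ∈ K
  · rw [if_pos h, Set.indicator_of_mem (show ω ∈ B t from h)]; simp
  · rw [if_neg h, Set.indicator_of_notMem (show ω ∉ B t from h)]; simp

end Meas
section Aux

variable {Ω : Type*} [MeasurableSpace Ω]

lemma measurableSet_cnt_event {n : ℕ} (f : Fin n → Ω → ℝ) (hf : ∀ t, Measurable (f t))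
    (c : ℝ → ℝ → Prop) [∀ a b : ℝ, Decidable (c a b)]
    (hc : MeasurableSet {p : ℝ × ℝ | c p.1 p.2}) (K : Set ℕ) (t : Fin n) :
    MeasurableSet {ω | ((univ.filter fun u => c (f u ω) (f t ω)).card : ℕ) ∈ K} := by
  have h : {ω | ((univ.filter fun u => c (f u ω) (f t ω)).card : ℕ) ∈ K}
      = (fun ω (u : Fin n) => f u ω) ⁻¹'
        {x | ((univ.filter fun u => c (x u) (x t)).card : ℕ) ∈ K} := rfl
  rw [h]
  exact (measurable_pi_lambda _ hf) ((measurable_cnt c hc t) (measurableSet_nat K))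

lemma nat_div_le_ofReal (a n : ℕ) (hn : 0 < n) (r : ℝ) (hr : 0 ≤ r) (h : (a : ℝ) ≤ n * r) :
    (a : ℝ≥0∞) / n ≤ ENNReal.ofReal r := by
  rw [ENNReal.div_le_iff_le_mul (Or.inl (by exact_mod_cast hn.ne'))
    (Or.inl (ENNReal.natCast_ne_top _))]
  calc (a : ℝ≥0∞) = ENNReal.ofReal a := (ENNReal.ofReal_natCast a).symm
    _ ≤ ENNReal.ofReal (r * n) := ENNReal.ofReal_le_ofReal (by linarith)
    _ = ENNReal.ofReal r * ENNReal.ofReal n := ENNReal.ofReal_mul hr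
    _ = ENNReal.ofReal r * n := by rw [ENNReal.ofReal_natCast]

lemma main_aux (μ : Measure Ω) [IsProbabilityMeasure μ]
    (α : ℝ) (hα0 : 0 < α) (hα1 : α < 1) (N : ℕ) (hN : 1 ≤ N)
    (f : Fin (N + 1) → Ω → ℝ) (hf : ∀ t, Measurable (f t))
    (hindep : iIndepFun f μ)
    (ν : Measure ℝ) [IsProbabilityMeasure ν] (hν : ∀ t, Measure.map (f t) μ = ν)
    (klo khi : ℕ)
    (hklo : klo = ⌊((N : ℝ) + 1) * α / 2⌋₊)
    (hkhi : khi = ⌈((N : ℝ) + 1) * (1 - α / 2)⌉₊) :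
    ENNReal.ofReal (1 - α) ≤
        μ {ω | ostatE (fun t : Fin N => f t.castSucc ω) klo ≤ (f (Fin.last N) ω : EReal) ∧
               (f (Fin.last N) ω : EReal) ≤ ostatE (fun t : Fin N => f t.castSucc ω) khi} ∧
      ((∀ᵐ ω ∂μ, Function.Injective fun u => f u ω) →
        μ {ω | ostatE (fun t : Fin N => f t.castSucc ω) klo ≤ (f (Fin.last N) ω : EReal) ∧
               (f (Fin.last N) ω : EReal) ≤ ostatE (fun t : Fin N => f t.castSucc ω) khi} ≤
          ENNReal.ofReal (1 - α + 2 / ((N : ℝ) + 1))) := by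
  classical
  have hn1 : (0 : ℝ) < (N : ℝ) + 1 := by positivity
  have hkloR : (klo : ℝ) ≤ ((N : ℝ) + 1) * α / 2 := hklo ▸ Nat.floor_le (by positivity)
  have hkloR2 : ((N : ℝ) + 1) * α / 2 - 1 ≤ klo := by
    rw [hklo]
    have := Nat.lt_floor_add_one (((N : ℝ) + 1) * α / 2)
    linarith
  have hkhiR : ((N : ℝ) + 1) * (1 - α / 2) ≤ khi := hkhi ▸ Nat.le_ceil _
  have hkhiR2 : (khi : ℝ) ≤ ((N : ℝ) + 1) * (1 - α / 2) + 1 := by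
    rw [hkhi]
    have := Nat.ceil_lt_add_one (show (0 : ℝ) ≤ ((N : ℝ) + 1) * (1 - α / 2) by nlinarith)
    linarith
  have hNR : (1 : ℝ) ≤ (N : ℝ) := by exact_mod_cast hN
  have hkloN : klo ≤ N := by
    have h : (klo : ℝ) < (N : ℝ) := by nlinarith
    exact_mod_cast h.le
  have hkhi1 : 1 ≤ khi := by
    have h : (0 : ℝ) < (khi : ℝ) := by nlinarith
    exact_mod_cast Nat.one_le_iff_ne_zero.2 (by exact_mod_cast h.ne')
  have hkhiN1 : khi ≤ N + 1 := by
    rw [hkhi]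
    refine Nat.ceil_le.2 ?_
    push_cast
    nlinarith
  have hklokhi : klo ≤ khi := by
    have h : (klo : ℝ) ≤ (khi : ℝ) := by nlinarith
    exact_mod_cast h
  -- notation
  set Wf : Ω → ℕ :=
    fun ω => (univ.filter fun u : Fin (N + 1) => f u ω ≤ f (Fin.last N) ω).card with hWf
  set Vf : Ω → ℕ :=
    fun ω => (univ.filter fun u : Fin (N + 1) => f u ω < f (Fin.last N) ω).card with hVf
  have hWsplit : ∀ ω, Wf ω
      = (univ.filter fun t : Fin N => f t.castSucc ω ≤ f (Fin.last N) ω).card + 1 := by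
    intro ω
    rw [show Wf ω = ∑ u : Fin (N + 1), if f u ω ≤ f (Fin.last N) ω then 1 else 0 from
      Finset.card_filter _ _]
    rw [Fin.sum_univ_castSucc, if_pos (le_refl (f (Fin.last N) ω)),
      Finset.card_filter (fun t : Fin N => f t.castSucc ω ≤ f (Fin.last N) ω)]
  have hVsplit : ∀ ω, Vf ω
      = (univ.filter fun t : Fin N => f t.castSucc ω < f (Fin.last N) ω).card := by
    intro ω
    rw [show Vf ω = ∑ u : Fin (N + 1), if f u ω < f (Fin.last N) ω then 1 else 0 from
      Finset.card_filter _ _]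
    rw [Fin.sum_univ_castSucc, if_neg (lt_irrefl (f (Fin.last N) ω)),
      Finset.card_filter (fun t : Fin N => f t.castSucc ω < f (Fin.last N) ω), add_zero]
  have hSeq : {ω | ostatE (fun t : Fin N => f t.castSucc ω) klo ≤ (f (Fin.last N) ω : EReal) ∧
               (f (Fin.last N) ω : EReal) ≤ ostatE (fun t : Fin N => f t.castSucc ω) khi}
      = {ω | klo + 1 ≤ Wf ω ∧ Vf ω < khi} := by
    ext ω
    simp only [Set.mem_setOf_eq]
    rw [ostatE_le_iff _ _ _ hkloN, le_ostatE_iff _ _ _ hkhi1 hkhiN1]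
    have hw := hWsplit ω
    have hv := hVsplit ω
    constructor
    · rintro ⟨h1, h2⟩; omega
    · rintro ⟨h1, h2⟩; omega
  rw [hSeq]
  -- measurable building blocks
  have hcle : MeasurableSet {p : ℝ × ℝ | p.1 ≤ p.2} := measurableSet_le measurable_fst measurable_snd
  have hclt : MeasurableSet {p : ℝ × ℝ | p.1 < p.2} := measurableSet_lt measurable_fst measurable_snd
  have hB1m : MeasurableSet {ω | Wf ω ∈ Set.Iic klo} :=
    measurableSet_cnt_event f hf (fun a b => a ≤ b) hcle (Set.Iic klo) (Fin.last N)
  have hB2m : MeasurableSet {ω | Vf ω ∈ Set.Ici khi} :=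
    measurableSet_cnt_event f hf (fun a b => a < b) hclt (Set.Ici khi) (Fin.last N)
  have hD1m : MeasurableSet {ω | Vf ω ∈ Set.Iio khi} :=
    measurableSet_cnt_event f hf (fun a b => a < b) hclt (Set.Iio khi) (Fin.last N)
  have hD0m : MeasurableSet {ω | Vf ω ∈ Set.Iio klo} :=
    measurableSet_cnt_event f hf (fun a b => a < b) hclt (Set.Iio klo) (Fin.last N)
  have hScompl : {ω | klo + 1 ≤ Wf ω ∧ Vf ω < khi}
      = ({ω | Wf ω ∈ Set.Iic klo} ∪ {ω | Vf ω ∈ Set.Ici khi})ᶜ := by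
    ext ω
    simp only [Set.mem_setOf_eq, Set.mem_compl_iff, Set.mem_union, Set.mem_Iic, Set.mem_Ici]
    omega
  have hSm : MeasurableSet {ω | klo + 1 ≤ Wf ω ∧ Vf ω < khi} := by
    rw [hScompl]; exact (hB1m.union hB2m).compl
  -- bound for B1
  have hmulB1 := mul_measure_cnt (μ := μ) f hf hindep ν hν (fun a b => a ≤ b) hcle
    (Set.Iic klo) (Fin.last N)
  have hintB1 : (∫⁻ ω, ((univ.filter fun t =>
      ((univ.filter fun u => f u ω ≤ f t ω).card : ℕ) ∈ Set.Iic klo).card : ℝ≥0∞) ∂μ)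
      ≤ (klo : ℝ≥0∞) := by
    calc _ ≤ ∫⁻ _, (klo : ℝ≥0∞) ∂μ := by
            refine lintegral_mono fun ω => ?_
            have h := card_cntLE_le (fun u => f u ω) klo
            refine Nat.cast_le.2 (le_trans (le_of_eq ?_) h)
            exact congrArg Finset.card
              (Finset.filter_congr fun t _ => by simp [cntLE, Set.mem_Iic])
      _ = (klo : ℝ≥0∞) := by simp [lintegral_const]
  have hB1 : μ {ω | Wf ω ∈ Set.Iic klo} ≤ ENNReal.ofReal (α / 2) := by
    have hle : μ {ω | Wf ω ∈ Set.Iic klo} ≤ (klo : ℝ≥0∞) / ((N + 1 : ℕ) : ℝ≥0∞) := by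
      refine (ENNReal.le_div_iff_mul_le (Or.inl (by exact_mod_cast (Nat.succ_ne_zero N)))
        (Or.inl (ENNReal.natCast_ne_top _))).2 ?_
      rw [mul_comm]
      exact hmulB1.le.trans hintB1
    refine hle.trans (nat_div_le_ofReal klo (N + 1) (Nat.succ_pos N) (α / 2) (by linarith) ?_)
    push_cast
    linarith
  -- bound for B2
  have hmulB2 := mul_measure_cnt (μ := μ) f hf hindep ν hν (fun a b => a < b) hclt
    (Set.Ici khi) (Fin.last N)
  have hintB2 : (∫⁻ ω, ((univ.filter fun t =>
      ((univ.filter fun u => f u ω < f t ω).card : ℕ) ∈ Set.Ici khi).card : ℝ≥0∞) ∂μ)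
      ≤ ((N + 1 - khi : ℕ) : ℝ≥0∞) := by
    calc _ ≤ ∫⁻ _, ((N + 1 - khi : ℕ) : ℝ≥0∞) ∂μ := by
            refine lintegral_mono fun ω => ?_
            have h := card_lt_cntLT_le (fun u => f u ω) khi hkhiN1
            refine Nat.cast_le.2 (le_trans (le_of_eq ?_) h)
            exact congrArg Finset.card
              (Finset.filter_congr fun t _ => by simp [cntLT, Set.mem_Ici])
      _ = ((N + 1 - khi : ℕ) : ℝ≥0∞) := by simp [lintegral_const]
  have hB2 : μ {ω | Vf ω ∈ Set.Ici khi} ≤ ENNReal.ofReal (α / 2) := by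
    have hle : μ {ω | Vf ω ∈ Set.Ici khi} ≤ ((N + 1 - khi : ℕ) : ℝ≥0∞) / ((N + 1 : ℕ) : ℝ≥0∞) := by
      refine (ENNReal.le_div_iff_mul_le (Or.inl (by exact_mod_cast (Nat.succ_ne_zero N)))
        (Or.inl (ENNReal.natCast_ne_top _))).2 ?_
      rw [mul_comm]
      exact hmulB2.le.trans hintB2
    refine hle.trans (nat_div_le_ofReal _ (N + 1) (Nat.succ_pos N) (α / 2) (by linarith) ?_)
    rw [Nat.cast_sub hkhiN1]
    push_cast
    nlinarith
  constructor
  · -- lower bound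
    have hcompl : μ {ω | klo + 1 ≤ Wf ω ∧ Vf ω < khi}
        = 1 - μ ({ω | Wf ω ∈ Set.Iic klo} ∪ {ω | Vf ω ∈ Set.Ici khi}) := by
      rw [hScompl]
      exact prob_compl_eq_one_sub (hB1m.union hB2m)
    rw [hcompl]
    have hu : μ ({ω | Wf ω ∈ Set.Iic klo} ∪ {ω | Vf ω ∈ Set.Ici khi}) ≤ ENNReal.ofReal α := by
      refine (measure_union_le _ _).trans ?_
      refine (add_le_add hB1 hB2).trans ?_
      rw [← ENNReal.ofReal_add (by linarith) (by linarith)]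
      norm_num
    calc ENNReal.ofReal (1 - α) = 1 - ENNReal.ofReal α := by
          rw [ENNReal.ofReal_sub _ hα0.le, ENNReal.ofReal_one]
      _ ≤ 1 - μ ({ω | Wf ω ∈ Set.Iic klo} ∪ {ω | Vf ω ∈ Set.Ici khi}) := tsub_le_tsub_left hu 1
  · -- upper bound
    intro hinj
    have hmulD1 := mul_measure_cnt (μ := μ) f hf hindep ν hν (fun a b => a < b) hclt
      (Set.Iio khi) (Fin.last N)
    have hmulD0 := mul_measure_cnt (μ := μ) f hf hindep ν hν (fun a b => a < b) hclt
      (Set.Iio klo) (Fin.last N)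
    have hcnt : ∀ (k : ℕ), k ≤ N + 1 → ∀ ω, Function.Injective (fun u => f u ω) →
        ((univ.filter fun t =>
          ((univ.filter fun u => f u ω < f t ω).card : ℕ) ∈ Set.Iio k).card : ℝ≥0∞)
          = (k : ℝ≥0∞) := by
      intro k hk ω hω
      have h := card_cntLT_lt_eq (fun u => f u ω) hω k hk
      have heq : (univ.filter fun t =>
          ((univ.filter fun u => f u ω < f t ω).card : ℕ) ∈ Set.Iio k)
          = (univ.filter fun t => cntLT (fun u => f u ω) t < k) :=
        Finset.filter_congr fun t _ => by simp [cntLT, Set.mem_Iio]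
      exact congrArg Nat.cast ((congrArg Finset.card heq).trans h)
    have hintD1 : (∫⁻ ω, ((univ.filter fun t =>
        ((univ.filter fun u => f u ω < f t ω).card : ℕ) ∈ Set.Iio khi).card : ℝ≥0∞) ∂μ)
        = (khi : ℝ≥0∞) := by
      rw [lintegral_congr_ae (hinj.mono fun ω hω => hcnt khi hkhiN1 ω hω)]
      simp [lintegral_const]
    have hintD0 : (∫⁻ ω, ((univ.filter fun t =>
        ((univ.filter fun u => f u ω < f t ω).card : ℕ) ∈ Set.Iio klo).card : ℝ≥0∞) ∂μ)
        = (klo : ℝ≥0∞) := by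
      rw [lintegral_congr_ae (hinj.mono fun ω hω => hcnt klo (by omega) ω hω)]
      simp [lintegral_const]
    have hn0' : ((N + 1 : ℕ) : ℝ≥0∞) ≠ 0 := by exact_mod_cast (Nat.succ_ne_zero N)
    have hnt' : ((N + 1 : ℕ) : ℝ≥0∞) ≠ ⊤ := ENNReal.natCast_ne_top _
    have hD1 : μ {ω | Vf ω ∈ Set.Iio khi} = (khi : ℝ≥0∞) / ((N + 1 : ℕ) : ℝ≥0∞) :=
      (ENNReal.eq_div_iff hn0' hnt').2 (hmulD1.trans hintD1)
    have hD0 : μ {ω | Vf ω ∈ Set.Iio klo} = (klo : ℝ≥0∞) / ((N + 1 : ℕ) : ℝ≥0∞) :=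
      (ENNReal.eq_div_iff hn0' hnt').2 (hmulD0.trans hintD0)
    have hae : ∀ᵐ ω ∂μ, (ω ∈ {ω | klo + 1 ≤ Wf ω ∧ Vf ω < khi}
        ↔ ω ∈ {ω | Vf ω ∈ Set.Iio khi} \ {ω | Vf ω ∈ Set.Iio klo}) := by
      refine hinj.mono fun ω hω => ?_
      have hwv : Wf ω = Vf ω + 1 := by
        show (univ.filter fun u : Fin (N + 1) => f u ω ≤ f (Fin.last N) ω).card
          = (univ.filter fun u : Fin (N + 1) => f u ω < f (Fin.last N) ω).card + 1
        have hins : (univ.filter fun u : Fin (N + 1) => f u ω ≤ f (Fin.last N) ω)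
            = insert (Fin.last N) (univ.filter fun u : Fin (N + 1) => f u ω < f (Fin.last N) ω) := by
          ext u
          simp only [mem_filter, mem_univ, true_and, mem_insert]
          constructor
          · intro h
            rcases eq_or_ne u (Fin.last N) with rfl | hu
            · exact Or.inl rfl
            · exact Or.inr (lt_of_le_of_ne h fun he => hu (hω he))
          · rintro (rfl | h)
            · exact le_refl _
            · exact h.le
        rw [hins, card_insert_of_notMem (by simp)]
      simp only [Set.mem_setOf_eq, Set.mem_diff, Set.mem_Iio]
      omega
    have hmeq : μ {ω | klo + 1 ≤ Wf ω ∧ Vf ω < khi}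
        = μ ({ω | Vf ω ∈ Set.Iio khi} \ {ω | Vf ω ∈ Set.Iio klo}) :=
      measure_congr (Filter.eventuallyEq_set.2 hae)
    have hdiff : μ ({ω | Vf ω ∈ Set.Iio khi} \ {ω | Vf ω ∈ Set.Iio klo})
        = μ {ω | Vf ω ∈ Set.Iio khi} - μ {ω | Vf ω ∈ Set.Iio klo} := by
      refine measure_diff ?_ hD0m.nullMeasurableSet (measure_ne_top μ _)
      intro ω h
      simp only [Set.mem_setOf_eq, Set.mem_Iio] at h ⊢
      omega
    rw [hmeq, hdiff, hD1, hD0]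
    have hcast : ((N + 1 : ℕ) : ℝ) = (N : ℝ) + 1 := by push_cast; ring
    have h1 : (khi : ℝ≥0∞) / ((N + 1 : ℕ) : ℝ≥0∞)
        = ENNReal.ofReal ((khi : ℝ) / ((N : ℝ) + 1)) := by
      rw [ENNReal.ofReal_div_of_pos hn1, ENNReal.ofReal_natCast, ← hcast,
        ENNReal.ofReal_natCast]
    have h0 : (klo : ℝ≥0∞) / ((N + 1 : ℕ) : ℝ≥0∞)
        = ENNReal.ofReal ((klo : ℝ) / ((N : ℝ) + 1)) := by
      rw [ENNReal.ofReal_div_of_pos hn1, ENNReal.ofReal_natCast, ← hcast,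
        ENNReal.ofReal_natCast]
    rw [h1, h0, ← ENNReal.ofReal_sub _ (by positivity)]
    refine ENNReal.ofReal_le_ofReal ?_
    rw [div_sub_div_same, div_le_iff₀ hn1]
    have hexp : (1 - α + 2 / ((N : ℝ) + 1)) * ((N : ℝ) + 1)
        = (1 - α) * ((N : ℝ) + 1) + 2 := by field_simp
    rw [hexp]
    nlinarith
end Aux

end Helpers

/-- Component-wise coverage guarantee of split conformal prediction
with signed vector-valued non-conformity scores: lower bound `1 - α` for each
component, and upper bound `1 - α + 2/(N+1)` under a.s. pairwise distinct scores. -/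
theorem stmt2 {Ω : Type*} [MeasurableSpace Ω] (μ : Measure Ω) [IsProbabilityMeasure μ]
    (α : ℝ) (hα : α ∈ Set.Ioo (0 : ℝ) 1) (N : ℕ) (hN : 1 ≤ N) (m : ℕ) (hm : 1 ≤ m)
    (s : Fin (N + 1) → Ω → Fin m → ℝ)
    (hmeas : ∀ t, Measurable (s t))
    (hindep : iIndepFun s μ)
    (hident : ∀ t t', IdentDistrib (s t) (s t') μ μ)
    (klo khi : ℕ)
    (hklo : klo = ⌊((N : ℝ) + 1) * α / 2⌋₊)
    (hkhi : khi = ⌈((N : ℝ) + 1) * (1 - α / 2)⌉₊) :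
    (∀ i : Fin m,
      ENNReal.ofReal (1 - α) ≤
        μ {ω | ostatE (fun t : Fin N => s t.castSucc ω i) klo ≤ (s (Fin.last N) ω i : EReal) ∧
               (s (Fin.last N) ω i : EReal) ≤ ostatE (fun t : Fin N => s t.castSucc ω i) khi}) ∧
      ((∀ i : Fin m, ∀ᵐ ω ∂μ, ∀ t t', t ≠ t' → s t ω i ≠ s t' ω i) →
        ∀ i : Fin m,
          μ {ω | ostatE (fun t : Fin N => s t.castSucc ω i) klo ≤ (s (Fin.last N) ω i : EReal) ∧
                 (s (Fin.last N) ω i : EReal) ≤ ostatE (fun t : Fin N => s t.castSucc ω i) khi} ≤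
            ENNReal.ofReal (1 - α + 2 / ((N : ℝ) + 1))) := by
  constructor
  · intro i
    haveI : IsProbabilityMeasure (Measure.map (fun ω => s 0 ω i) μ) :=
      Measure.isProbabilityMeasure_map ((measurable_pi_apply i).comp (hmeas 0)).aemeasurable
    exact (main_aux μ α hα.1 hα.2 N hN (fun t ω => s t ω i)
      (fun t => (measurable_pi_apply i).comp (hmeas t))
      (hindep.comp (fun t v => v i) (fun t => measurable_pi_apply i))
      (Measure.map (fun ω => s 0 ω i) μ)
      (fun t => ((hident t 0).comp (measurable_pi_apply i)).map_eq)
      klo khi hklo hkhi).1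
  · intro hdist i
    haveI : IsProbabilityMeasure (Measure.map (fun ω => s 0 ω i) μ) :=
      Measure.isProbabilityMeasure_map ((measurable_pi_apply i).comp (hmeas 0)).aemeasurable
    refine (main_aux μ α hα.1 hα.2 N hN (fun t ω => s t ω i)
      (fun t => (measurable_pi_apply i).comp (hmeas t))
      (hindep.comp (fun t v => v i) (fun t => measurable_pi_apply i))
      (Measure.map (fun ω => s 0 ω i) μ)
      (fun t => ((hident t 0).comp (measurable_pi_apply i)).map_eq)
      klo khi hklo hkhi).2 ?_
    exact (hdist i).mono fun ω hω u u' h => by_contra fun hne => hω u u' hne h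
end

section
/- Fix α ∈ (0,1), a structural matrix H, and a weight vector w ∈ (0,∞)^m, and set P_w = H(Hᵀ diag(w) H)⁻¹ Hᵀ diag(w). Let ŝ_1,…,ŝ_N be i.i.d. random vectors in ℝ^m with a common elliptical distribution, and set s̃_t = P_w ŝ_t for each t. Let k_lo = ⌊(N+1)α/2⌋ and k_hi = ⌈(N+1)(1−α/2)⌉, and for each i ∈ {1,…,m} define the interval lengths ℓ̂_i = ŝ_{(k_hi),i} − ŝ_{(k_lo),i} and ℓ̃_i = s̃_{(k_hi),i} − s̃_{(k_lo),i}, where the order statistics are taken component-wise over t = 1,…,N, with conventions that the 0-th order statistic is −∞ and the (N+1)-th is +∞. Then E[ Σ_{i=1}^m w_i ℓ̃_i² ] ≤ E[ Σ_{i=1}^m w_i ℓ̂_i² ] (as an inequality in [0, +∞]). -/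
open MeasureTheory ProbabilityTheory Matrix
open scoped ENNReal

/-- Conversion from `EReal` to `ℝ≥0∞` (sends `+∞` to `∞`, negative values to `0`). -/
noncomputable def erealToENNReal (x : EReal) : ℝ≥0∞ :=
  if x = ⊤ then ⊤ else ENNReal.ofReal x.toReal

/-- A random vector `z` in `ℝ^k` follows a spherical distribution (w.r.t. `μ`) if `Γ z`
has the same law as `z` for every orthogonal matrix `Γ`. -/
def IsSpherical {Ω : Type*} [MeasurableSpace Ω] {k : ℕ} (μ : Measure Ω)
    (z : Ω → Fin k → ℝ) : Prop :=
  ∀ Γ : Matrix (Fin k) (Fin k) ℝ, Γ * Γᵀ = 1 →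
    Measure.map (fun ω => Γ.mulVec (z ω)) μ = Measure.map z μ

/-- A random vector `s` follows an elliptical distribution if it has the law of
`c + M z` where `z` follows a spherical distribution on `ℝ^k` and `M Mᵀ` has rank `k`. -/
def IsElliptical {Ω : Type*} [MeasurableSpace Ω] {ι : Type*} [Fintype ι] [DecidableEq ι]
    (μ : Measure Ω) (s : Ω → ι → ℝ) : Prop :=
  ∃ (k : ℕ) (c : ι → ℝ) (M : Matrix ι (Fin k) ℝ) (z : Ω → Fin k → ℝ),
    Measurable z ∧ (M * Mᵀ).rank = k ∧ IsSpherical μ z ∧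
      Measure.map s μ = Measure.map (fun ω => c + M.mulVec (z ω)) μ

/-! ### Auxiliary lemmas on order statistics -/

lemma ostat_comp_mono' {N : ℕ} (g : ℝ → ℝ) (hg : Monotone g) (s : Fin N → ℝ) {k : ℕ}
    (h1 : 1 ≤ k) (h2 : k ≤ N) : ostat (g ∘ s) k = g (ostat s k) := by
  have hm1 : Monotone ((g ∘ s) ∘ Tuple.sort s) := hg.comp (Tuple.monotone_sort s)
  have hm2 := Tuple.unique_monotone (Tuple.monotone_sort (g ∘ s)) hm1
  simp only [ostat, dif_pos (⟨h1, h2⟩ : 1 ≤ k ∧ k ≤ N)]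
  exact congrFun hm2 _

lemma ostat_mono_idx {N : ℕ} (s : Fin N → ℝ) {k l : ℕ} (hk : 1 ≤ k) (hkl : k ≤ l) (hl : l ≤ N) :
    ostat s k ≤ ostat s l := by
  have hkN : k ≤ N := le_trans hkl hl
  have h1 : 1 ≤ l := le_trans hk hkl
  simp only [ostat, dif_pos (⟨hk, hkN⟩ : 1 ≤ k ∧ k ≤ N), dif_pos (⟨h1, hl⟩ : 1 ≤ l ∧ l ≤ N)]
  exact Tuple.monotone_sort s (by simp [Fin.le_def]; omega)

lemma ostat_le_iff {N : ℕ} (s : Fin N → ℝ) {k : ℕ} (hk1 : 1 ≤ k) (hkN : k ≤ N) (c : ℝ) :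
    ostat s k ≤ c ↔ ∃ A : Finset (Fin N), A.card = k ∧ ∀ t ∈ A, s t ≤ c := by
  have hN : 0 < N := lt_of_lt_of_le hk1 hkN
  set σ := Tuple.sort s with hσ
  have hmono : Monotone (s ∘ σ) := Tuple.monotone_sort s
  have hval : ostat s k = s (σ ⟨k - 1, by omega⟩) := by
    simp [ostat, dif_pos (⟨hk1, hkN⟩ : 1 ≤ k ∧ k ≤ N), hσ]
  constructor
  · intro h
    refine ⟨Finset.image (fun j : Fin k => σ (Fin.castLE hkN j)) Finset.univ, ?_, ?_⟩
    · rw [Finset.card_image_of_injective _ (show Function.Injective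
        (fun j : Fin k => σ (Fin.castLE hkN j)) from σ.injective.comp (Fin.castLE_injective hkN))]
      simp
    · intro t ht
      simp only [Finset.mem_image, Finset.mem_univ, true_and] at ht
      obtain ⟨j, rfl⟩ := ht
      refine le_trans ?_ (hval ▸ h)
      have : (Fin.castLE hkN j) ≤ (⟨k - 1, by omega⟩ : Fin N) := by
        simp [Fin.le_def]; omega
      exact hmono this
  · rintro ⟨A, hcard, hA⟩
    by_contra hlt
    push_neg at hlt
    have key : ∀ t ∈ A, (σ.symm t : ℕ) < k - 1 := by
      intro t ht
      by_contra hge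
      push_neg at hge
      have : ostat s k ≤ s t := by
        rw [hval]
        have := hmono (show (⟨k - 1, by omega⟩ : Fin N) ≤ σ.symm t by simp [Fin.le_def]; omega)
        simpa using this
      exact absurd (le_trans this (hA t ht)) (not_le.mpr hlt)
    have hinj : Set.InjOn (fun t : Fin N => (σ.symm t : ℕ)) A := fun a _ b _ hab => by
      exact σ.symm.injective (Fin.val_injective hab)
    have hsub : ∀ t ∈ A, (fun t : Fin N => (σ.symm t : ℕ)) t ∈ Finset.range (k - 1) := by
      intro t ht; simpa using key t ht
    have := Finset.card_le_card_of_injOn _ hsub hinj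
    rw [hcard, Finset.card_range] at this
    omega

lemma measurable_ostat {N : ℕ} (k : ℕ) : Measurable (fun s : Fin N → ℝ => ostat s k) := by
  by_cases h : 1 ≤ k ∧ k ≤ N
  · apply measurable_of_Iic
    intro c
    have : (fun s : Fin N → ℝ => ostat s k) ⁻¹' Set.Iic c =
        ⋃ A ∈ {A : Finset (Fin N) | A.card = k}, ⋂ t ∈ A, {s : Fin N → ℝ | s t ≤ c} := by
      ext s
      simp only [Set.mem_preimage, Set.mem_Iic, ostat_le_iff s h.1 h.2, Set.mem_iUnion,
        Set.mem_setOf_eq, Set.mem_iInter]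
      constructor
      · rintro ⟨A, h1, h2⟩; exact ⟨A, h1, h2⟩
      · rintro ⟨A, h1, h2⟩; exact ⟨A, h1, h2⟩
    rw [this]
    refine MeasurableSet.biUnion (Set.to_countable _) fun A _ =>
      MeasurableSet.biInter (Set.to_countable _) fun t _ => ?_
    exact measurableSet_le (measurable_pi_apply t) measurable_const
  · have : (fun s : Fin N → ℝ => ostat s k) = fun _ => 0 := by
      funext s; simp [ostat, h]
    rw [this]; exact measurable_const

lemma ostat_const {N : ℕ} (c : ℝ) {k : ℕ} (h1 : 1 ≤ k) (h2 : k ≤ N) :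
    ostat (fun _ : Fin N => c) k = c := by
  simp [ostat, dif_pos (⟨h1, h2⟩ : 1 ≤ k ∧ k ≤ N)]

/-! ### The gap functional -/

/-- The (nonnegative-extended-real) gap between the `khi`-th and `klo`-th order statistics. -/
noncomputable def gapN {N : ℕ} (klo khi : ℕ) (s : Fin N → ℝ) : ℝ≥0∞ :=
  ENNReal.ofReal (ostat s khi - ostat s klo)

lemma measurable_gapN {N : ℕ} (klo khi : ℕ) : Measurable (gapN (N := N) klo khi) :=
  ENNReal.measurable_ofReal.comp ((measurable_ostat khi).sub (measurable_ostat klo))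

lemma gapN_shift {N : ℕ} {klo khi : ℕ} (h1 : 1 ≤ klo) (h2 : klo ≤ N) (h3 : 1 ≤ khi)
    (h4 : khi ≤ N) (b : ℝ) (s : Fin N → ℝ) :
    gapN klo khi (fun t => b + s t) = gapN klo khi s := by
  have hg : Monotone (fun x : ℝ => b + x) := fun x y h => add_le_add_right h b
  have e1 : (fun t => b + s t) = (fun x : ℝ => b + x) ∘ s := rfl
  unfold gapN
  rw [e1, ostat_comp_mono' _ hg s h3 h4, ostat_comp_mono' _ hg s h1 h2]
  ring_nf

lemma gapN_smul {N : ℕ} {klo khi : ℕ} (h1 : 1 ≤ klo) (h2 : klo ≤ N) (h3 : 1 ≤ khi)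
    (h4 : khi ≤ N) {r : ℝ} (hr : 0 ≤ r) (s : Fin N → ℝ) :
    gapN klo khi (fun t => r * s t) = ENNReal.ofReal r * gapN klo khi s := by
  have hg : Monotone (fun x : ℝ => r * x) := fun x y h => mul_le_mul_of_nonneg_left h hr
  have e1 : (fun t => r * s t) = (fun x : ℝ => r * x) ∘ s := rfl
  unfold gapN
  rw [e1, ostat_comp_mono' _ hg s h3 h4, ostat_comp_mono' _ hg s h1 h2,
    show r * ostat s khi - r * ostat s klo = r * (ostat s khi - ostat s klo) by ring,
    ENNReal.ofReal_mul hr]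

/-! ### Matrix lemmas -/

lemma vec_le {ι : Type*} [Fintype ι] [DecidableEq ι] (w : ι → ℝ) (hw : ∀ i, 0 ≤ w i)
    (P : Matrix ι ι ℝ) (hK : Pᵀ * diagonal w * P = diagonal w * P) (x : ι → ℝ) :
    ∑ i, w i * (P.mulVec x i)^2 ≤ ∑ i, w i * (x i)^2 := by
  set u := P.mulVec x with hu
  have hdiag : ∀ y : ι → ℝ, (diagonal w).mulVec y = fun i => w i * y i := by
    intro y; funext i; simp [Matrix.mulVec_diagonal]
  have hcross : ∑ i, x i * (w i * u i) = ∑ i, u i * (w i * u i) := by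
    have h1 : x ⬝ᵥ (Pᵀ * diagonal w * P).mulVec x = x ⬝ᵥ (diagonal w * P).mulVec x := by
      rw [hK]
    have h2 : x ⬝ᵥ (diagonal w * P).mulVec x = ∑ i, x i * (w i * u i) := by
      rw [← Matrix.mulVec_mulVec, hdiag]
      simp [dotProduct, hu]
    have h3 : x ⬝ᵥ (Pᵀ * diagonal w * P).mulVec x = ∑ i, u i * (w i * u i) := by
      rw [show Pᵀ * diagonal w * P = Pᵀ * (diagonal w * P) from Matrix.mul_assoc _ _ _,
        ← Matrix.mulVec_mulVec, Matrix.dotProduct_mulVec, Matrix.vecMul_transpose,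
        ← Matrix.mulVec_mulVec, hdiag]
      simp [dotProduct, hu]
    rw [h3, h2] at h1
    linarith
  have hnn : 0 ≤ ∑ i, w i * (x i - u i)^2 :=
    Finset.sum_nonneg fun i _ => mul_nonneg (hw i) (sq_nonneg _)
  have hexp : ∑ i, w i * (x i - u i)^2 =
      ∑ i, w i * (x i)^2 - 2 * ∑ i, x i * (w i * u i) + ∑ i, u i * (w i * u i) := by
    rw [show (∑ i, w i * (x i - u i)^2) =
        ∑ i, (w i * (x i)^2 - 2 * (x i * (w i * u i)) + u i * (w i * u i)) from
      Finset.sum_congr rfl (fun i _ => by ring),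
      Finset.sum_add_distrib, Finset.sum_sub_distrib, ← Finset.mul_sum]
  have huu : ∀ i, u i * (w i * u i) = w i * (u i)^2 := fun i => by ring
  simp only [huu] at hcross hexp
  rw [hcross] at hexp
  linarith [hexp, hnn]

lemma key_matrix {n p : ℕ} (Hsub : Matrix (Fin p) (Fin n) ℝ)
    (H : Matrix (Fin n ⊕ Fin p) (Fin n) ℝ) (hH : H = Matrix.fromRows 1 Hsub)
    (w : (Fin n ⊕ Fin p) → ℝ) (hw : ∀ i, 0 < w i)
    (Pw : Matrix (Fin n ⊕ Fin p) (Fin n ⊕ Fin p) ℝ)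
    (hPw : Pw = H * (Hᵀ * Matrix.diagonal w * H)⁻¹ * (Hᵀ * Matrix.diagonal w)) :
    Pwᵀ * diagonal w * Pw = diagonal w * Pw := by
  set W := diagonal w with hW
  set G := Hᵀ * W * H with hG
  have hWt : Wᵀ = W := diagonal_transpose w
  have hGt : Gᵀ = G := by
    rw [hG, Matrix.transpose_mul, Matrix.transpose_mul, hWt, Matrix.transpose_transpose,
      Matrix.mul_assoc]
  have hGpd : G.PosDef := by
    rw [Matrix.posDef_iff_dotProduct_mulVec]
    constructor
    · rw [Matrix.IsHermitian]
      simpa using hGt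
    · intro x hx
      have hsx : star x = x := by funext i; simp
      have hcalc : star x ⬝ᵥ G.mulVec x = ∑ i, (H.mulVec x i) * (w i * H.mulVec x i) := by
        rw [hsx, hG, show Hᵀ * W * H = Hᵀ * (W * H) from Matrix.mul_assoc _ _ _,
          ← Matrix.mulVec_mulVec, Matrix.dotProduct_mulVec, Matrix.vecMul_transpose,
          ← Matrix.mulVec_mulVec]
        simp [dotProduct, Matrix.mulVec_diagonal, hW]
      rw [hcalc]
      obtain ⟨j, hj⟩ : ∃ j, x j ≠ 0 := by
        by_contra hc; push_neg at hc; exact hx (funext hc)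
      refine Finset.sum_pos' (fun i _ => ?_) ⟨Sum.inl j, Finset.mem_univ _, ?_⟩
      · have h1 := (hw i).le
        nlinarith [sq_nonneg (H.mulVec x i)]
      · have hHx : H.mulVec x (Sum.inl j) = x j := by
          rw [hH, Matrix.fromRows_mulVec]
          simp
        rw [hHx]
        have h1 := hw (Sum.inl j)
        nlinarith [pow_pos (abs_pos.mpr hj) 2, sq_abs (x j)]
  have hdet : IsUnit G.det := (Matrix.isUnit_iff_isUnit_det _).1 hGpd.isUnit
  have hinv : G⁻¹ * G = 1 := Matrix.nonsing_inv_mul _ hdet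
  have hPwt : Pwᵀ = W * (H * (G⁻¹ * Hᵀ)) := by
    rw [hPw]
    simp [Matrix.transpose_mul, hWt, Matrix.transpose_nonsing_inv, hGt, Matrix.mul_assoc]
  have hGr : ∀ Y : Matrix (Fin n) (Fin n ⊕ Fin p) ℝ, Hᵀ * (W * (H * Y)) = G * Y := by
    intro Y; rw [hG]; simp only [Matrix.mul_assoc]
  rw [hPwt, hPw]
  calc W * (H * (G⁻¹ * Hᵀ)) * W * (H * G⁻¹ * (Hᵀ * W))
      = W * (H * (G⁻¹ * (Hᵀ * (W * (H * (G⁻¹ * (Hᵀ * W))))))) := by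
        simp only [Matrix.mul_assoc]
    _ = W * (H * (G⁻¹ * (G * (G⁻¹ * (Hᵀ * W))))) := by rw [hGr]
    _ = W * (H * (G⁻¹ * (Hᵀ * W))) := by rw [← Matrix.mul_assoc G⁻¹ G, hinv, Matrix.one_mul]
    _ = W * (H * G⁻¹ * (Hᵀ * W)) := by simp only [Matrix.mul_assoc]

lemma trace_le {n p : ℕ} {k : ℕ} (w : (Fin n ⊕ Fin p) → ℝ) (hw : ∀ i, 0 < w i)
    (P : Matrix (Fin n ⊕ Fin p) (Fin n ⊕ Fin p) ℝ)
    (hK : Pᵀ * diagonal w * P = diagonal w * P)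
    (M : Matrix (Fin n ⊕ Fin p) (Fin k) ℝ) :
    ∑ i, w i * ∑ j, ((P * M) i j)^2 ≤ ∑ i, w i * ∑ j, (M i j)^2 := by
  have hswap : ∀ Q : Matrix (Fin n ⊕ Fin p) (Fin k) ℝ,
      ∑ i, w i * ∑ j, (Q i j)^2 = ∑ j, ∑ i, w i * (Q i j)^2 := by
    intro Q
    simp_rw [Finset.mul_sum]
    exact Finset.sum_comm
  rw [hswap, hswap]
  apply Finset.sum_le_sum
  intro j _
  have hcol : ∀ i, (P * M) i j = P.mulVec (fun r => M r j) i := by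
    intro i; simp [Matrix.mul_apply, Matrix.mulVec, dotProduct]
  simp_rw [hcol]
  exact vec_le w (fun i => (hw i).le) P hK (fun r => M r j)

/-! ### Rotation to the first axis -/

lemma exists_rot {k : ℕ} (hk : 0 < k) (a : Fin k → ℝ) :
    ∃ Θ : Matrix (Fin k) (Fin k) ℝ, Θᵀ * Θ = 1 ∧
      Θ.mulVec a = fun j => if j = (⟨0, hk⟩ : Fin k) then Real.sqrt (∑ i, (a i)^2) else 0 := by
  set r := Real.sqrt (∑ i, (a i)^2) with hr
  have hrnn : 0 ≤ r := Real.sqrt_nonneg _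
  set va : EuclideanSpace ℝ (Fin k) := (EuclideanSpace.equiv (Fin k) ℝ).symm a with hva
  set e0 : EuclideanSpace ℝ (Fin k) := EuclideanSpace.single (⟨0, hk⟩ : Fin k) r with he0
  have hnorm : ‖va‖ = r := by
    rw [EuclideanSpace.norm_eq]
    congr 1
    apply Finset.sum_congr rfl
    intro i _
    rw [Real.norm_eq_abs, sq_abs]
    rfl
  have hnorm0 : ‖e0‖ = r := by
    rw [he0, EuclideanSpace.norm_single, Real.norm_eq_abs, abs_of_nonneg hrnn]
  set f := Submodule.reflection (ℝ ∙ (va - e0))ᗮ with hfdef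
  have hf : f va = e0 := Submodule.reflection_sub (hnorm.trans hnorm0.symm)
  set Θ : Matrix (Fin k) (Fin k) ℝ :=
    Matrix.of (fun i j => f (EuclideanSpace.single j 1) i) with hΘ
  have hdecomp : ∀ x : EuclideanSpace ℝ (Fin k),
      x = ∑ j, x j • EuclideanSpace.single j (1 : ℝ) := by
    intro x
    ext i
    rw [WithLp.ofLp_sum, Finset.sum_apply]
    simp [EuclideanSpace.single_apply]
  have hmul : ∀ x : EuclideanSpace ℝ (Fin k), Θ.mulVec (x : Fin k → ℝ) = (f x : Fin k → ℝ) := by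
    intro x
    funext i
    conv_rhs => rw [hdecomp x]
    rw [map_sum, WithLp.ofLp_sum, Finset.sum_apply]
    simp only [_root_.map_smul, PiLp.smul_apply, smul_eq_mul]
    simp [Matrix.mulVec, dotProduct, hΘ, mul_comm]
  refine ⟨Θ, ?_, ?_⟩
  · ext j l
    have : (Θᵀ * Θ) j l = ∑ i, Θ i j * Θ i l := by
      simp [Matrix.mul_apply, Matrix.transpose_apply]
    rw [this]
    have hinner : ∑ i, Θ i j * Θ i l =
        (inner ℝ (f (EuclideanSpace.single j 1)) (f (EuclideanSpace.single l 1)) : ℝ) := by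
      rw [PiLp.inner_apply]
      simp [hΘ, mul_comm]
    rw [hinner, f.inner_map_map]
    rw [EuclideanSpace.inner_single_left]
    simp [EuclideanSpace.single_apply, Matrix.one_apply, eq_comm]
  · have := hmul va
    rw [hf] at this
    rw [show (va : Fin k → ℝ) = a from rfl] at this
    rw [this]
    funext j
    simp [he0, EuclideanSpace.single_apply]

/-! ### Measurability helpers -/

lemma measurable_mulVec_fun {ι ι' : Type*} [Fintype ι'] (A : Matrix ι ι' ℝ) :
    Measurable (fun v : ι' → ℝ => A.mulVec v) := by
  apply measurable_pi_lambda
  intro i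
  simp only [Matrix.mulVec, dotProduct]
  exact Finset.measurable_sum _ fun j _ => (measurable_pi_apply (X := fun _ : ι' => ℝ) j).const_mul (A i j)

lemma measurable_dot_row {N k : ℕ} (a : Fin k → ℝ) :
    Measurable (fun V : Fin N → Fin k → ℝ => fun t => a ⬝ᵥ V t) := by
  apply measurable_pi_lambda
  intro t
  simp only [dotProduct]
  have hev : ∀ j : Fin k, Measurable fun V : Fin N → Fin k → ℝ => V t j :=
    fun j => (measurable_pi_apply j).comp (measurable_pi_apply t)
  exact Finset.measurable_sum _ fun j _ => (hev j).const_mul (a j)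

/-! ### Joint law of independent random vectors -/

lemma joint_law {Ω : Type*} [MeasurableSpace Ω] (μ : Measure Ω) [IsProbabilityMeasure μ]
    {ι : Type*} [Fintype ι] {β : Type*} [MeasurableSpace β]
    (f : ι → Ω → β) (hmeas : ∀ i, Measurable (f i))
    (hind : iIndepFun f μ) :
    Measure.map (fun ω i => f i ω) μ = Measure.pi (fun i => Measure.map (f i) μ) := by
  have : ∀ i, IsProbabilityMeasure (Measure.map (f i) μ) :=
    fun i => Measure.isProbabilityMeasure_map (hmeas i).aemeasurable
  refine (Measure.pi_eq fun s hs => ?_).symm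
  have hmeas' : Measurable (fun ω i => f i ω) := measurable_pi_lambda _ hmeas
  rw [Measure.map_apply hmeas' (MeasurableSet.univ_pi hs)]
  have hpre : (fun ω i => f i ω) ⁻¹' Set.pi Set.univ s = ⋂ i ∈ Finset.univ, f i ⁻¹' s i := by
    ext ω
    simp [Set.mem_pi]
  rw [hpre, hind.measure_inter_preimage_eq_mul Finset.univ (fun i _ => hs i)]
  exact Finset.prod_congr rfl fun i _ =>
    (Measure.map_apply (hmeas i) (hs i)).symm

/-! ### Rotation invariance computation -/

lemma T_eq {N k klo khi : ℕ} (h1 : 1 ≤ klo) (h2 : klo ≤ N) (h3 : 1 ≤ khi) (h4 : khi ≤ N)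
    (hk : 0 < k) (η : Measure (Fin k → ℝ)) [IsProbabilityMeasure η]
    (hsph : ∀ Γ : Matrix (Fin k) (Fin k) ℝ, Γ * Γᵀ = 1 → Measure.map Γ.mulVec η = η)
    (a : Fin k → ℝ) :
    ∫⁻ V, (gapN klo khi (fun t => a ⬝ᵥ V t))^2 ∂(Measure.pi (fun _ : Fin N => η)) =
      ENNReal.ofReal (∑ j, (a j)^2) *
        ∫⁻ V, (gapN klo khi (fun t => V t (⟨0, hk⟩ : Fin k)))^2
          ∂(Measure.pi (fun _ : Fin N => η)) := by
  obtain ⟨Θ, hΘorth, hΘa⟩ := exists_rot hk a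
  set r := Real.sqrt (∑ i, (a i)^2) with hrdef
  have hrnn : 0 ≤ r := Real.sqrt_nonneg _
  have hr2 : r^2 = ∑ j, (a j)^2 := Real.sq_sqrt (Finset.sum_nonneg fun j _ => sq_nonneg _)
  set Γ := Θᵀ with hΓdef
  have hΓ : Γ * Γᵀ = 1 := by
    rw [hΓdef, Matrix.transpose_transpose]
    exact hΘorth
  have hmp : MeasurePreserving (fun V : Fin N → Fin k → ℝ => fun t => Γ.mulVec (V t))
      (Measure.pi (fun _ : Fin N => η)) (Measure.pi (fun _ : Fin N => η)) :=
    measurePreserving_pi _ _ (fun _ => ⟨measurable_mulVec_fun Γ, hsph Γ hΓ⟩)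
  have hGmeas : Measurable (fun V : Fin N → Fin k → ℝ => (gapN klo khi (fun t => a ⬝ᵥ V t))^2) :=
    ((measurable_gapN klo khi).comp (measurable_dot_row a)).pow_const 2
  have step1 : ∫⁻ V, (gapN klo khi (fun t => a ⬝ᵥ V t))^2 ∂(Measure.pi (fun _ : Fin N => η)) =
      ∫⁻ V, (gapN klo khi (fun t => a ⬝ᵥ Γ.mulVec (V t)))^2
        ∂(Measure.pi (fun _ : Fin N => η)) :=
    (hmp.lintegral_comp hGmeas).symm
  have hdot : ∀ v : Fin k → ℝ, a ⬝ᵥ Γ.mulVec v = r * v (⟨0, hk⟩ : Fin k) := by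
    intro v
    rw [Matrix.dotProduct_mulVec, hΓdef, Matrix.vecMul_transpose, hΘa]
    simp [dotProduct, Finset.sum_ite_eq, ite_mul]
  rw [step1]
  have step2 : ∀ V : Fin N → Fin k → ℝ,
      (gapN klo khi (fun t => a ⬝ᵥ Γ.mulVec (V t)))^2 =
        ENNReal.ofReal (∑ j, (a j)^2) *
          (gapN klo khi (fun t => V t (⟨0, hk⟩ : Fin k)))^2 := by
    intro V
    have : (fun t => a ⬝ᵥ Γ.mulVec (V t)) = fun t => r * V t (⟨0, hk⟩ : Fin k) := by
      funext t; exact hdot (V t)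
    rw [this, gapN_smul h1 h2 h3 h4 hrnn, mul_pow, ← ENNReal.ofReal_pow hrnn, hr2]
  simp_rw [step2]
  have hm : Measurable fun V : Fin N → Fin k → ℝ =>
      (gapN klo khi (fun t => V t (⟨0, hk⟩ : Fin k)))^2 := by
    refine ((measurable_gapN klo khi).comp ?_).pow_const 2
    exact measurable_pi_lambda _ fun t =>
      (measurable_pi_apply _).comp (measurable_pi_apply t)
  exact lintegral_const_mul _ hm

set_option maxHeartbeats 2000000 in
/-- Efficiency of hierarchical component-wise SCP for a fixed weight
vector `w`: with the projection `P_w = H (Hᵀ diag(w) H)⁻¹ Hᵀ diag(w)`, the expected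
weighted sum of squared interval lengths is reduced. -/
theorem stmt3 {Ω : Type*} [MeasurableSpace Ω] (μ : Measure Ω) [IsProbabilityMeasure μ]
    (α : ℝ) (hα : α ∈ Set.Ioo (0 : ℝ) 1)
    (n p : ℕ) (hn : 2 ≤ n) (hp : 1 ≤ p)
    (Hsub : Matrix (Fin p) (Fin n) ℝ)
    (H : Matrix (Fin n ⊕ Fin p) (Fin n) ℝ) (hH : H = Matrix.fromRows 1 Hsub)
    (w : (Fin n ⊕ Fin p) → ℝ) (hw : ∀ i, 0 < w i)
    (Pw : Matrix (Fin n ⊕ Fin p) (Fin n ⊕ Fin p) ℝ)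
    (hPw : Pw = H * (Hᵀ * Matrix.diagonal w * H)⁻¹ * (Hᵀ * Matrix.diagonal w))
    (N : ℕ) (hN : 1 ≤ N)
    (shat : Fin N → Ω → (Fin n ⊕ Fin p) → ℝ)
    (hmeas : ∀ t, Measurable (shat t))
    (hindep : iIndepFun shat μ)
    (hident : ∀ t t', IdentDistrib (shat t) (shat t') μ μ)
    (hell : ∀ t, IsElliptical μ (shat t))
    (stilde : Fin N → Ω → (Fin n ⊕ Fin p) → ℝ)
    (hstilde : ∀ t ω, stilde t ω = Pw.mulVec (shat t ω))
    (klo khi : ℕ)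
    (hklo : klo = ⌊((N : ℝ) + 1) * α / 2⌋₊)
    (hkhi : khi = ⌈((N : ℝ) + 1) * (1 - α / 2)⌉₊)
    (ellhat elltilde : (Fin n ⊕ Fin p) → Ω → EReal)
    (hellhat : ∀ i ω, ellhat i ω =
      ostatE (fun t => shat t ω i) khi - ostatE (fun t => shat t ω i) klo)
    (helltilde : ∀ i ω, elltilde i ω =
      ostatE (fun t => stilde t ω i) khi - ostatE (fun t => stilde t ω i) klo) :
    ∫⁻ ω, ∑ i, ENNReal.ofReal (w i) * (erealToENNReal (elltilde i ω)) ^ 2 ∂μ ≤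
      ∫⁻ ω, ∑ i, ENNReal.ofReal (w i) * (erealToENNReal (ellhat i ω)) ^ 2 ∂μ := by
  obtain ⟨hα0, hα1⟩ := hα
  have hkhi1 : 1 ≤ khi := by
    rw [hkhi]
    rw [Nat.one_le_ceil_iff]
    nlinarith [Nat.cast_nonneg (α := ℝ) N]
  by_cases hdeg : klo = 0
  · -- degenerate case: the reference interval has infinite length, RHS = ∞
    have hkhiN : N < khi := by
      rw [hkhi, Nat.lt_ceil]
      have : ((N : ℝ) + 1) * α / 2 < 1 := by
        rw [hklo] at hdeg
        have := Nat.floor_eq_zero.mp hdeg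
        exact this
      nlinarith
    have htop : ∀ i ω, ellhat i ω = ⊤ := by
      intro i ω
      rw [hellhat]
      have hlo : ostatE (fun t => shat t ω i) klo = ⊥ := by
        simp [ostatE, hdeg]
      have hhi : ostatE (fun t => shat t ω i) khi ≠ ⊥ := by
        unfold ostatE
        split_ifs with h h'
        · exact EReal.coe_ne_bot _
        · omega
        · exact top_ne_bot
      rw [hlo]
      exact EReal.sub_bot hhi
    have hRHS : ∫⁻ ω, ∑ i, ENNReal.ofReal (w i) * (erealToENNReal (ellhat i ω)) ^ 2 ∂μ = ⊤ := by
      have hint : ∀ ω, ∑ i, ENNReal.ofReal (w i) * (erealToENNReal (ellhat i ω)) ^ 2 = ⊤ := by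
        intro ω
        set i0 : Fin n ⊕ Fin p := Sum.inl ⟨0, by omega⟩ with hi0
        have hterm : ENNReal.ofReal (w i0) * (erealToENNReal (ellhat i0 ω)) ^ 2 = ⊤ := by
          rw [htop i0 ω]
          have h1 : erealToENNReal ⊤ = ⊤ := by simp [erealToENNReal]
          rw [h1, show ((⊤:ℝ≥0∞))^2 = ⊤ from by rw [pow_two, ENNReal.top_mul_top],
            ENNReal.mul_top (by simpa [ENNReal.ofReal_eq_zero, not_le] using (hw i0))]
        rw [eq_top_iff]
        refine le_trans (le_of_eq hterm.symm) (Finset.single_le_sum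
          (f := fun i => ENNReal.ofReal (w i) * (erealToENNReal (ellhat i ω)) ^ 2)
          (fun i _ => zero_le) (Finset.mem_univ i0))
      simp_rw [hint]
      simp
    rw [hRHS]
    exact le_top
  · -- nondegenerate case
    have hklo1 : 1 ≤ klo := by omega
    have hkloR : (1 : ℝ) ≤ ((N : ℝ) + 1) * α / 2 := by
      by_contra hc
      push_neg at hc
      have : klo = 0 := by rw [hklo]; exact Nat.floor_eq_zero.mpr hc
      exact hdeg this
    have hkhiN : khi ≤ N := by
      rw [hkhi, Nat.ceil_le]
      push_cast
      nlinarith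
    have hkloN : klo ≤ N := by
      have : klo ≤ khi := by
        rw [hklo, hkhi]
        have hle : ((N : ℝ) + 1) * α / 2 ≤ ((N : ℝ) + 1) * (1 - α / 2) := by
          nlinarith [Nat.cast_nonneg (α := ℝ) N]
        calc ⌊((N : ℝ) + 1) * α / 2⌋₊ ≤ ⌊((N : ℝ) + 1) * (1 - α / 2)⌋₊ := Nat.floor_mono hle
          _ ≤ ⌈((N : ℝ) + 1) * (1 - α / 2)⌉₊ := Nat.floor_le_ceil _
      omega
    -- rewrite the interval lengths using gapN
    have hhat : ∀ i ω, erealToENNReal (ellhat i ω) = gapN klo khi (fun t => shat t ω i) := by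
      intro i ω
      rw [hellhat]
      unfold ostatE
      rw [if_pos ⟨hkhi1, hkhiN⟩, if_pos ⟨hklo1, hkloN⟩, ← EReal.coe_sub]
      unfold erealToENNReal gapN
      rw [if_neg (EReal.coe_ne_top _), EReal.toReal_coe]
    have htilde : ∀ i ω, erealToENNReal (elltilde i ω) =
        gapN klo khi (fun t => Pw.mulVec (shat t ω) i) := by
      intro i ω
      rw [helltilde]
      simp_rw [hstilde]
      unfold ostatE
      rw [if_pos ⟨hkhi1, hkhiN⟩, if_pos ⟨hklo1, hkloN⟩, ← EReal.coe_sub]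
      unfold erealToENNReal gapN
      rw [if_neg (EReal.coe_ne_top _), EReal.toReal_coe]
    simp_rw [hhat, htilde]
    -- the elliptical representation
    obtain ⟨k, c, M, z, hz, hrank, hsph, hmap0⟩ := hell ⟨0, hN⟩
    have hν : ∀ t, Measure.map (shat t) μ = Measure.map (fun ω => c + M.mulVec (z ω)) μ :=
      fun t => ((hident t ⟨0, hN⟩).map_eq).trans hmap0
    set η : Measure (Fin k → ℝ) := Measure.map z μ with hη
    have hηprob : IsProbabilityMeasure η := Measure.isProbabilityMeasure_map hz.aemeasurable
    set π : Measure (Fin N → Fin k → ℝ) := Measure.pi (fun _ => η) with hπ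
    have haff : Measurable (fun v : Fin k → ℝ => c + M.mulVec v) :=
      (measurable_mulVec_fun M).const_add c
    have hjoint : Measure.map (fun ω t => shat t ω) μ =
        Measure.map (fun (V : Fin N → Fin k → ℝ) t => c + M.mulVec (V t)) π := by
      rw [joint_law μ shat hmeas hindep]
      have h1 : (fun i : Fin N => Measure.map (shat i) μ) =
          fun _ : Fin N => Measure.map (fun v : Fin k → ℝ => c + M.mulVec v) η := by
        funext t
        rw [hν t, hη, Measure.map_map haff hz]
        rfl
      rw [h1]
      exact (measurePreserving_pi _ _
        (fun _ => ⟨haff, rfl⟩)).map_eq.symm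
    -- auxiliary measurabilities
    have hrowmeas : ∀ (A : Matrix (Fin n ⊕ Fin p) (Fin n ⊕ Fin p) ℝ) (i : Fin n ⊕ Fin p),
        Measurable (fun S : Fin N → (Fin n ⊕ Fin p) → ℝ =>
          (gapN klo khi (fun t => A.mulVec (S t) i))^2) := by
      intro A i
      refine ((measurable_gapN klo khi).comp ?_).pow_const 2
      apply measurable_pi_lambda
      intro t
      have : (fun S : Fin N → (Fin n ⊕ Fin p) → ℝ => A.mulVec (S t) i) =
          (fun v : (Fin n ⊕ Fin p) → ℝ => A.mulVec v i) ∘ (fun S => S t) := rfl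
      rw [this]
      exact ((measurable_pi_apply i).comp (measurable_mulVec_fun A)).comp (measurable_pi_apply t)
    have hFmeas : ∀ (A : Matrix (Fin n ⊕ Fin p) (Fin n ⊕ Fin p) ℝ),
        Measurable (fun S : Fin N → (Fin n ⊕ Fin p) → ℝ =>
          ∑ i, ENNReal.ofReal (w i) * (gapN klo khi (fun t => A.mulVec (S t) i))^2) := by
      intro A
      exact Finset.measurable_sum _ fun i _ => (hrowmeas A i).const_mul _
    have hSmeas : Measurable (fun ω (t : Fin N) => shat t ω) :=
      measurable_pi_lambda _ hmeas
    -- reduction of each side to an integral over π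
    have hside : ∀ A : Matrix (Fin n ⊕ Fin p) (Fin n ⊕ Fin p) ℝ,
        ∫⁻ ω, ∑ i, ENNReal.ofReal (w i) *
            (gapN klo khi (fun t => A.mulVec (shat t ω) i))^2 ∂μ =
          ∑ i, ENNReal.ofReal (w i) *
            ∫⁻ V, (gapN klo khi (fun t => (fun j => (A * M) i j) ⬝ᵥ V t))^2 ∂π := by
      intro A
      have e1 : ∫⁻ ω, ∑ i, ENNReal.ofReal (w i) *
          (gapN klo khi (fun t => A.mulVec (shat t ω) i))^2 ∂μ =
          ∫⁻ S, ∑ i, ENNReal.ofReal (w i) *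
            (gapN klo khi (fun t => A.mulVec (S t) i))^2
            ∂(Measure.map (fun ω t => shat t ω) μ) :=
        (lintegral_map (hFmeas A) hSmeas).symm
      have hΦmeas : Measurable (fun (V : Fin N → Fin k → ℝ) t => c + M.mulVec (V t)) :=
        measurable_pi_lambda _ fun t => haff.comp (measurable_pi_apply t)
      have e2 : ∫⁻ S, ∑ i, ENNReal.ofReal (w i) *
          (gapN klo khi (fun t => A.mulVec (S t) i))^2
          ∂(Measure.map (fun ω t => shat t ω) μ) =
          ∫⁻ V, ∑ i, ENNReal.ofReal (w i) *
            (gapN klo khi (fun t => A.mulVec (c + M.mulVec (V t)) i))^2 ∂π := by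
        rw [hjoint, lintegral_map (hFmeas A) hΦmeas]
      have e3 : ∀ (V : Fin N → Fin k → ℝ) i,
          gapN klo khi (fun t => A.mulVec (c + M.mulVec (V t)) i) =
            gapN klo khi (fun t => (fun j => (A * M) i j) ⬝ᵥ V t) := by
        intro V i
        have hv : ∀ v : Fin k → ℝ, A.mulVec (c + M.mulVec v) i =
            A.mulVec c i + (fun j => (A * M) i j) ⬝ᵥ v := by
          intro v
          simp only [Matrix.mulVec_add, Pi.add_apply]
          congr 1
          rw [Matrix.mulVec_mulVec]
          rfl
        simp_rw [hv]
        exact gapN_shift hklo1 hkloN hkhi1 hkhiN _ _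
      rw [e1, e2]
      have e4 : ∫⁻ V, ∑ i, ENNReal.ofReal (w i) *
          (gapN klo khi (fun t => A.mulVec (c + M.mulVec (V t)) i))^2 ∂π =
          ∫⁻ V, ∑ i, ENNReal.ofReal (w i) *
            (gapN klo khi (fun t => (fun j => (A * M) i j) ⬝ᵥ V t))^2 ∂π := by
        apply lintegral_congr
        intro V
        exact Finset.sum_congr rfl fun i _ => by rw [e3 V i]
      rw [e4, lintegral_finset_sum]
      · exact Finset.sum_congr rfl fun i _ => lintegral_const_mul _
          (((measurable_gapN klo khi).comp (measurable_dot_row _)).pow_const 2)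
      · intro i _
        exact (((measurable_gapN klo khi).comp (measurable_dot_row _)).pow_const 2).const_mul _
    rw [show (fun ω => ∑ i, ENNReal.ofReal (w i) *
        (gapN klo khi (fun t => shat t ω i))^2) =
        (fun ω => ∑ i, ENNReal.ofReal (w i) *
          (gapN klo khi (fun t => (1 : Matrix (Fin n ⊕ Fin p) (Fin n ⊕ Fin p) ℝ).mulVec
            (shat t ω) i))^2) from funext fun ω => by simp [Matrix.one_mulVec]]
    rw [hside Pw, hside 1]
    -- now compare the two sums
    rcases Nat.eq_zero_or_pos k with hk0 | hkpos
    · -- k = 0 : everything is constant, both sides vanish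
      subst hk0
      have hzero : ∀ (A : Matrix (Fin n ⊕ Fin p) (Fin n ⊕ Fin p) ℝ) (i : Fin n ⊕ Fin p),
          ∫⁻ V, (gapN klo khi (fun t => (fun j => (A * M) i j) ⬝ᵥ V t))^2 ∂π = 0 := by
        intro A i
        have : ∀ V : Fin N → Fin 0 → ℝ,
            (gapN klo khi (fun t => (fun j => (A * M) i j) ⬝ᵥ V t))^2 = 0 := by
          intro V
          have hdot0 : (fun t : Fin N => (fun j => (A * M) i j) ⬝ᵥ V t) = fun _ => (0:ℝ) := by
            funext t; simp [dotProduct]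
          rw [hdot0]
          unfold gapN
          rw [ostat_const _ hkhi1 hkhiN, ostat_const _ hklo1 hkloN]
          simp
        simp_rw [this]
        simp
      simp_rw [hzero]
      simp
    · -- k > 0 : use the rotation invariance
      have hsph' : ∀ Γ : Matrix (Fin k) (Fin k) ℝ, Γ * Γᵀ = 1 →
          Measure.map Γ.mulVec η = η := by
        intro Γ hΓ
        rw [hη, Measure.map_map (measurable_mulVec_fun Γ) hz]
        exact hsph Γ hΓ
      have hTeq := fun (a : Fin k → ℝ) =>
        T_eq (N := N) hklo1 hkloN hkhi1 hkhiN hkpos η hsph' a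
      have hrewrite : ∀ (A : Matrix (Fin n ⊕ Fin p) (Fin n ⊕ Fin p) ℝ),
          ∑ i, ENNReal.ofReal (w i) *
            ∫⁻ V, (gapN klo khi (fun t => (fun j => (A * M) i j) ⬝ᵥ V t))^2 ∂π =
          ENNReal.ofReal (∑ i, w i * ∑ j, ((A * M) i j)^2) *
            ∫⁻ V, (gapN klo khi (fun t => V t (⟨0, hkpos⟩ : Fin k)))^2 ∂π := by
        intro A
        rw [hπ]
        have : ∀ i : Fin n ⊕ Fin p, ENNReal.ofReal (w i) *
            ∫⁻ V, (gapN klo khi (fun t => (fun j => (A * M) i j) ⬝ᵥ V t))^2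
              ∂(Measure.pi (fun _ : Fin N => η)) =
            ENNReal.ofReal (w i * ∑ j, ((A * M) i j)^2) *
              ∫⁻ V, (gapN klo khi (fun t => V t (⟨0, hkpos⟩ : Fin k)))^2
                ∂(Measure.pi (fun _ : Fin N => η)) := by
          intro i
          rw [hTeq (fun j => (A * M) i j), ← mul_assoc,
            ← ENNReal.ofReal_mul (hw i).le]
        simp_rw [this]
        rw [← Finset.sum_mul, ← ENNReal.ofReal_sum_of_nonneg]
        intro i _
        exact mul_nonneg (hw i).le (Finset.sum_nonneg fun j _ => sq_nonneg _)
      rw [hrewrite Pw, hrewrite 1]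
      apply mul_le_mul_left
      apply ENNReal.ofReal_le_ofReal
      have hK := key_matrix Hsub H hH w hw Pw hPw
      have := trace_le w hw Pw hK M
      calc ∑ i, w i * ∑ j, ((Pw * M) i j)^2 ≤ ∑ i, w i * ∑ j, (M i j)^2 := this
        _ = ∑ i, w i * ∑ j,
            (((1 : Matrix (Fin n ⊕ Fin p) (Fin n ⊕ Fin p) ℝ) * M) i j)^2 := by
          rw [Matrix.one_mul]
end

section
/- Let H be a structural matrix, let W be a symmetric positive semi-definite m×m real matrix, and let Σ be a symmetric positive definite m×m real matrix. Set P_{Σ⁻¹} = H(HᵀΣ⁻¹H)⁻¹HᵀΣ⁻¹. Then for every projection matrix P onto Im(H), Tr(W P_{Σ⁻¹} Σ P_{Σ⁻¹}ᵀ) ≤ Tr(W P Σ Pᵀ). -/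
open Matrix

open scoped MatrixOrder in
lemma myTraceMulNonneg {m : Type*} [Fintype m] [DecidableEq m]
    {A B : Matrix m m ℝ} (hA : A.PosSemidef) (hB : B.PosSemidef) :
    0 ≤ (A * B).trace := by
  set S := CFC.sqrt B with hS
  have h1 : A * B = A * S * S := by rw [mul_assoc, CFC.sqrt_mul_sqrt_self B hB.nonneg]
  have h2 : (A * S * S).trace = (S * A * S).trace := by
    rw [Matrix.trace_mul_cycle, mul_assoc]
  have hpsd : (S * A * S).PosSemidef := by
    have := hA.conjTranspose_mul_mul_same S
    rwa [(CFC.sqrt_nonneg B).posSemidef.1.eq] at this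
  have hdiag : ∀ i, 0 ≤ (S * A * S) i i := by
    intro i
    have := hpsd.dotProduct_mulVec_nonneg (Pi.single i 1)
    simpa [mulVec, dotProduct, Pi.single_apply] using this
  rw [h1, h2]
  exact Finset.sum_nonneg fun i _ => hdiag i

/-- Minimum-trace projection (Wickramasuriya et al., 2019): among all
projection matrices `P` onto `Im(H)`, the projection `P_{Σ⁻¹}` minimizes
`Tr(W P Σ Pᵀ)` for every symmetric positive semi-definite `W`. -/
theorem stmt6 (n p : ℕ) (hn : 2 ≤ n) (hp : 1 ≤ p)
    (Hsub : Matrix (Fin p) (Fin n) ℝ)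
    (H : Matrix (Fin n ⊕ Fin p) (Fin n) ℝ) (hH : H = Matrix.fromRows 1 Hsub)
    (W Sig : Matrix (Fin n ⊕ Fin p) (Fin n ⊕ Fin p) ℝ)
    (hW : W.PosSemidef) (hSig : Sig.PosDef)
    (PS : Matrix (Fin n ⊕ Fin p) (Fin n ⊕ Fin p) ℝ)
    (hPS : PS = H * (Hᵀ * Sig⁻¹ * H)⁻¹ * (Hᵀ * Sig⁻¹))
    (P : Matrix (Fin n ⊕ Fin p) (Fin n ⊕ Fin p) ℝ)
    (hP1 : P * P = P) (hP2 : Set.range P.mulVec = Set.range H.mulVec) :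
    (W * PS * Sig * PSᵀ).trace ≤ (W * P * Sig * Pᵀ).trace := by
  -- H is injective on mulVec
  have hHinj : ∀ x : Fin n → ℝ, H *ᵥ x = 0 → x = 0 := by
    intro x hx
    funext i
    have := congrFun hx (Sum.inl i)
    simpa [hH, mulVec, dotProduct, Matrix.fromRows_apply_inl, Matrix.one_apply] using this
  -- Sig inverse posdef
  have hSigInv : (Sig⁻¹).PosDef := hSig.inv
  -- G posdef
  set G := Hᵀ * Sig⁻¹ * H with hG
  have hGpd : G.PosDef := by
    refine Matrix.PosDef.of_dotProduct_mulVec_pos ?_ ?_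
    · have := Matrix.isHermitian_conjTranspose_mul_mul H hSigInv.1
      rwa [Matrix.conjTranspose_eq_transpose_of_trivial] at this
    · intro x hx
      have hHx : H *ᵥ x ≠ 0 := fun h => hx (hHinj x h)
      have := hSigInv.dotProduct_mulVec_pos hHx
      have hrw : Hᵀ = Hᴴ := (Matrix.conjTranspose_eq_transpose_of_trivial H).symm
      rw [hG, hrw]
      simpa only [star_mulVec, Matrix.dotProduct_mulVec, Matrix.vecMul_vecMul] using this
  have hGu : IsUnit G.det := isUnit_iff_ne_zero.mpr hGpd.det_pos.ne'
  have hSu : IsUnit Sig.det := isUnit_iff_ne_zero.mpr hSig.det_pos.ne'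
  -- P fixes range of H
  have hPH : P * H = H := by
    have key : ∀ x, P *ᵥ (H *ᵥ x) = H *ᵥ x := by
      intro x
      have hx : H *ᵥ x ∈ Set.range P.mulVec := hP2 ▸ ⟨x, rfl⟩
      obtain ⟨y, hy⟩ := hx
      rw [← hy, Matrix.mulVec_mulVec, hP1]
    ext i j
    have := congrFun (key (Pi.single j 1)) i
    simpa [Matrix.mulVec_mulVec, Matrix.mulVec_single, Matrix.mul_apply, Matrix.mulVec, dotProduct, Pi.single_apply] using this
  -- symmetry facts
  have hSigT : Sigᵀ = Sig := by
    have := hSig.1.eq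
    rwa [Matrix.conjTranspose_eq_transpose_of_trivial] at this
  have hSigInvT : (Sig⁻¹)ᵀ = Sig⁻¹ := by
    rw [Matrix.transpose_nonsing_inv, hSigT]
  have hGT : Gᵀ = G := by
    have := hGpd.1.eq
    rwa [Matrix.conjTranspose_eq_transpose_of_trivial] at this
  have hGinvT : (G⁻¹)ᵀ = G⁻¹ := by rw [Matrix.transpose_nonsing_inv, hGT]
  set A := H * G⁻¹ * Hᵀ with hA
  have hAT : Aᵀ = A := by
    simp only [hA, Matrix.transpose_mul, hGinvT, Matrix.transpose_transpose, Matrix.mul_assoc]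
  have hPSSig : PS * Sig = A := by
    have h : Hᵀ * Sig⁻¹ * Sig = Hᵀ := by
      rw [Matrix.mul_assoc, Matrix.nonsing_inv_mul Sig hSu, Matrix.mul_one]
    rw [hPS, Matrix.mul_assoc, h, hA]
  have hPST : PSᵀ = Sig⁻¹ * A := by
    rw [hPS, hA]
    simp only [Matrix.transpose_mul, hSigInvT, Matrix.transpose_transpose, hGinvT,
      Matrix.mul_assoc]
  -- PS * Sig * PSᵀ = A
  have hGG : A * (Sig⁻¹ * A) = A := by
    rw [hA]
    calc H * G⁻¹ * Hᵀ * (Sig⁻¹ * (H * G⁻¹ * Hᵀ))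
        = H * G⁻¹ * (Hᵀ * Sig⁻¹ * H) * (G⁻¹ * Hᵀ) := by
          simp only [Matrix.mul_assoc]
      _ = H * G⁻¹ * Hᵀ := by
          rw [← hG, Matrix.mul_assoc H, Matrix.nonsing_inv_mul G hGu, Matrix.mul_one,
            ← Matrix.mul_assoc]
  have hPSSigPS : PS * Sig * PSᵀ = A := by rw [hPSSig, hPST, hGG]
  -- PS * Sig * Pᵀ = A
  have hAPT : A * Pᵀ = A := by
    rw [hA, Matrix.mul_assoc, ← Matrix.transpose_mul, hPH]
  have hPSSigP : PS * Sig * Pᵀ = A := by rw [hPSSig, hAPT]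
  -- P * Sig * PSᵀ = A
  have hPSigPS : P * Sig * PSᵀ = A := by
    have : (P * Sig * PSᵀ)ᵀ = A := by
      simp only [Matrix.transpose_mul, Matrix.transpose_transpose, hSigT]
      rw [← Matrix.mul_assoc, hPSSigP]
    calc P * Sig * PSᵀ = ((P * Sig * PSᵀ)ᵀ)ᵀ := by rw [Matrix.transpose_transpose]
      _ = Aᵀ := by rw [this]
      _ = A := hAT
  -- decomposition
  set D := P - PS with hD
  have hdecomp : P * Sig * Pᵀ = A + D * Sig * Dᵀ := by
    simp only [hD, Matrix.sub_mul, Matrix.mul_sub, Matrix.transpose_sub]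
    rw [hPSSigPS, hPSigPS, hPSSigP]
    abel
  have hDpsd : (D * Sig * Dᵀ).PosSemidef := by
    have := hSig.posSemidef.mul_mul_conjTranspose_same D
    rwa [Matrix.conjTranspose_eq_transpose_of_trivial] at this
  have htr : (W * P * Sig * Pᵀ).trace
      = (W * PS * Sig * PSᵀ).trace + (W * (D * Sig * Dᵀ)).trace := by
    have h1 : W * P * Sig * Pᵀ = W * (P * Sig * Pᵀ) := by
      simp only [Matrix.mul_assoc]
    have h2 : W * PS * Sig * PSᵀ = W * A := by
      rw [Matrix.mul_assoc, Matrix.mul_assoc, ← Matrix.mul_assoc PS, hPSSigPS]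
    rw [h1, h2, hdecomp, Matrix.mul_add, Matrix.trace_add]
  rw [htr]
  exact le_add_of_nonneg_right (myTraceMulNonneg hW hDpsd)
end

section
/- Let H be a structural matrix, W a symmetric positive definite m×m real matrix, and set P_W = H(HᵀWH)⁻¹HᵀW. Then for every m×k real matrix M (any k ≥ 1), 0 ≤ Tr(W P_W M Mᵀ P_Wᵀ) ≤ Tr(W M Mᵀ). -/
open Matrix

private lemma trace_mul_transpose_nonneg {m k : Type*} [Fintype m] [Fintype k]
    (B : Matrix m k ℝ) : 0 ≤ (B * Bᵀ).trace := by
  rw [Matrix.trace]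
  refine Finset.sum_nonneg fun i _ => ?_
  simp only [Matrix.diag_apply, Matrix.mul_apply, Matrix.transpose_apply]
  exact Finset.sum_nonneg fun j _ => mul_self_nonneg _

/-- Trace reduction by the `W`-orthogonal projection `P_W` onto `Im(H)`:
`0 ≤ Tr(W P_W M Mᵀ P_Wᵀ) ≤ Tr(W M Mᵀ)` for every `m × k` matrix `M`. -/
theorem stmt8 (n p : ℕ) (hn : 2 ≤ n) (hp : 1 ≤ p)
    (Hsub : Matrix (Fin p) (Fin n) ℝ)
    (H : Matrix (Fin n ⊕ Fin p) (Fin n) ℝ) (hH : H = Matrix.fromRows 1 Hsub)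
    (W : Matrix (Fin n ⊕ Fin p) (Fin n ⊕ Fin p) ℝ) (hW : W.PosDef)
    (PW : Matrix (Fin n ⊕ Fin p) (Fin n ⊕ Fin p) ℝ)
    (hPW : PW = H * (Hᵀ * W * H)⁻¹ * (Hᵀ * W))
    (k : ℕ) (hk : 1 ≤ k) (M : Matrix (Fin n ⊕ Fin p) (Fin k) ℝ) :
    0 ≤ (W * PW * (M * Mᵀ) * PWᵀ).trace ∧
      (W * PW * (M * Mᵀ) * PWᵀ).trace ≤ (W * (M * Mᵀ)).trace := by
  have hWsym : Wᵀ = W := by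
    have := hW.isHermitian
    rwa [Matrix.IsHermitian, Matrix.conjTranspose_eq_transpose_of_trivial] at this
  -- `HᵀWH` is positive definite
  have hApd : (Hᵀ * W * H).PosDef := by
    refine Matrix.PosDef.of_dotProduct_mulVec_pos ?_ ?_
    · rw [Matrix.IsHermitian, Matrix.conjTranspose_eq_transpose_of_trivial]
      simp [Matrix.transpose_mul, hWsym, Matrix.mul_assoc]
    · intro x hx
      have hHx : H *ᵥ x ≠ 0 := by
        intro h0
        apply hx
        funext i
        have : (H *ᵥ x) (Sum.inl i) = x i := by
          rw [hH, Matrix.fromRows_mulVec]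
          simp
        rw [h0] at this
        simpa using this.symm
      have h2 := hW.dotProduct_mulVec_pos hHx
      have e : (Hᵀ * W * H) *ᵥ x = Hᵀ *ᵥ (W *ᵥ (H *ᵥ x)) := by
        rw [← Matrix.mulVec_mulVec, ← Matrix.mulVec_mulVec]
      rw [e, Matrix.dotProduct_mulVec, Matrix.vecMul_transpose]
      simpa using h2
  have hdet : IsUnit (Hᵀ * W * H).det := isUnit_iff_ne_zero.mpr hApd.det_pos.ne'
  have hAt : (Hᵀ * W * H)ᵀ = Hᵀ * W * H := by
    simp [Matrix.transpose_mul, hWsym, Matrix.mul_assoc]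
  have hAinvT : ((Hᵀ * W * H)⁻¹)ᵀ = (Hᵀ * W * H)⁻¹ := by
    rw [Matrix.transpose_nonsing_inv, hAt]
  -- W * PW is symmetric
  have hAinvT' : ((Hᵀ * (W * H))⁻¹)ᵀ = (Hᵀ * (W * H))⁻¹ := by
    rw [← Matrix.mul_assoc]; exact hAinvT
  have hWP : (W * PW)ᵀ = W * PW := by
    rw [hPW]
    simp only [Matrix.transpose_mul, hWsym, Matrix.transpose_transpose,
      Matrix.mul_assoc, hAinvT']
  have hPWW : PWᵀ * W = W * PW := by
    have := hWP
    rwa [Matrix.transpose_mul, hWsym] at this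
  -- PW is idempotent
  have hidem : PW * PW = PW := by
    rw [hPW]
    calc H * (Hᵀ * W * H)⁻¹ * (Hᵀ * W) * (H * (Hᵀ * W * H)⁻¹ * (Hᵀ * W))
        = H * ((Hᵀ * W * H)⁻¹ * (Hᵀ * W * H)) * ((Hᵀ * W * H)⁻¹ * (Hᵀ * W)) := by
          simp only [Matrix.mul_assoc]
      _ = H * (Hᵀ * W * H)⁻¹ * (Hᵀ * W) := by
          rw [Matrix.nonsing_inv_mul _ hdet]
          simp only [Matrix.mul_one, Matrix.mul_assoc]
  -- square root of W
  obtain ⟨S, hSS, hSsym⟩ : ∃ S : Matrix (Fin n ⊕ Fin p) (Fin n ⊕ Fin p) ℝ, S * S = W ∧ Sᵀ = S := by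
    letI := Matrix.instPartialOrder (n := Fin n ⊕ Fin p) (𝕜 := ℝ)
    haveI := Matrix.instStarOrderedRing (n := Fin n ⊕ Fin p) (𝕜 := ℝ)
    haveI := Matrix.instNonnegSpectrumClass (n := Fin n ⊕ Fin p) (𝕜 := ℝ)
    have hW0 : 0 ≤ W := hW.posSemidef.nonneg
    refine ⟨CFC.sqrt W, CFC.sqrt_mul_sqrt_self W hW0, ?_⟩
    have := (CFC.sqrt_nonneg W).posSemidef.isHermitian
    rwa [Matrix.IsHermitian, Matrix.conjTranspose_eq_transpose_of_trivial] at this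
  -- main trace identity 1
  have t1 : (W * PW * (M * Mᵀ) * PWᵀ).trace = ((S * PW * M) * (S * PW * M)ᵀ).trace := by
    rw [show (S * PW * M) * (S * PW * M)ᵀ = (S * PW * (M * Mᵀ) * PWᵀ) * Sᵀ from by
      simp only [Matrix.transpose_mul, Matrix.mul_assoc], hSsym,
      Matrix.trace_mul_comm (S * PW * (M * Mᵀ) * PWᵀ) S]
    rw [show S * (S * PW * (M * Mᵀ) * PWᵀ) = (S * S) * PW * (M * Mᵀ) * PWᵀ from by
      simp only [Matrix.mul_assoc], hSS]
  -- main trace identity 2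
  have t2 : ((S * (1 - PW) * M) * (S * (1 - PW) * M)ᵀ).trace
      = (W * ((1 - PW) * (M * Mᵀ) * (1 - PW)ᵀ)).trace := by
    rw [show (S * (1 - PW) * M) * (S * (1 - PW) * M)ᵀ
        = (S * ((1 - PW) * (M * Mᵀ) * (1 - PW)ᵀ)) * Sᵀ from by
      simp only [Matrix.transpose_mul, Matrix.mul_assoc], hSsym,
      Matrix.trace_mul_comm (S * ((1 - PW) * (M * Mᵀ) * (1 - PW)ᵀ)) S]
    rw [show S * (S * ((1 - PW) * (M * Mᵀ) * (1 - PW)ᵀ))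
        = (S * S) * ((1 - PW) * (M * Mᵀ) * (1 - PW)ᵀ) from by
      simp only [Matrix.mul_assoc], hSS]
  -- trace manipulations
  have eA : (W * (M * Mᵀ) * PWᵀ).trace = (W * PW * (M * Mᵀ)).trace := by
    rw [Matrix.trace_mul_comm (W * (M * Mᵀ)) PWᵀ,
      show PWᵀ * (W * (M * Mᵀ)) = (PWᵀ * W) * (M * Mᵀ) from (Matrix.mul_assoc _ _ _).symm,
      hPWW]
  have eB : (W * PW * (M * Mᵀ) * PWᵀ).trace = (W * PW * (M * Mᵀ)).trace := by
    rw [Matrix.trace_mul_comm (W * PW * (M * Mᵀ)) PWᵀ]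
    congr 1
    calc PWᵀ * (W * PW * (M * Mᵀ)) = (PWᵀ * W) * (PW * (M * Mᵀ)) := by
          simp only [Matrix.mul_assoc]
      _ = W * (PW * PW) * (M * Mᵀ) := by rw [hPWW]; simp only [Matrix.mul_assoc]
      _ = W * PW * (M * Mᵀ) := by rw [hidem]
  have hexp : W * ((1 - PW) * (M * Mᵀ) * (1 - PW)ᵀ)
      = W * (M * Mᵀ) - W * PW * (M * Mᵀ) - W * (M * Mᵀ) * PWᵀ
        + W * PW * (M * Mᵀ) * PWᵀ := by
    simp only [Matrix.transpose_sub, Matrix.transpose_one]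
    noncomm_ring
  have expand : (W * ((1 - PW) * (M * Mᵀ) * (1 - PW)ᵀ)).trace
      = (W * (M * Mᵀ)).trace - (W * PW * (M * Mᵀ) * PWᵀ).trace := by
    rw [hexp, Matrix.trace_add, Matrix.trace_sub, Matrix.trace_sub, eA, eB]
    ring
  have pos1 := trace_mul_transpose_nonneg (S * PW * M)
  have pos2 := trace_mul_transpose_nonneg (S * (1 - PW) * M)
  rw [t2, expand] at pos2
  constructor
  · rw [t1]; exact pos1
  · linarith
end

section
/- Let H be a structural matrix and Σ a symmetric positive definite m×m real matrix, and set P_{Σ⁻¹} = H(HᵀΣ⁻¹H)⁻¹HᵀΣ⁻¹. An m×m real matrix P is a projection matrix onto Im(H) (i.e., P² = P and the column space of P equals Im(H)) if and only if P = P_{Σ⁻¹} + HA for some n×m real matrix A satisfying AH = 0 (the n×n zero matrix). -/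
open Matrix

lemma mat_ext_of_mulVec {m n : Type*} [Fintype n] [DecidableEq n]
    (A B : Matrix m n ℝ) (h : ∀ v, A *ᵥ v = B *ᵥ v) : A = B := by
  ext i j
  have := congrFun (h (Pi.single j 1)) i
  simpa using this

/-- A matrix `P` is a projection matrix onto `Im(H)` if and only if
`P = P_{Σ⁻¹} + H A` for some `n × m` matrix `A` with `A H = 0`. -/
theorem stmt16 (n p : ℕ) (hn : 2 ≤ n) (hp : 1 ≤ p)
    (Hsub : Matrix (Fin p) (Fin n) ℝ)
    (H : Matrix (Fin n ⊕ Fin p) (Fin n) ℝ) (hH : H = Matrix.fromRows 1 Hsub)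
    (Sig : Matrix (Fin n ⊕ Fin p) (Fin n ⊕ Fin p) ℝ) (hSig : Sig.PosDef)
    (PS : Matrix (Fin n ⊕ Fin p) (Fin n ⊕ Fin p) ℝ)
    (hPS : PS = H * (Hᵀ * Sig⁻¹ * H)⁻¹ * (Hᵀ * Sig⁻¹))
    (P : Matrix (Fin n ⊕ Fin p) (Fin n ⊕ Fin p) ℝ) :
    (P * P = P ∧ Set.range P.mulVec = Set.range H.mulVec) ↔
      ∃ A : Matrix (Fin n) (Fin n ⊕ Fin p) ℝ, A * H = 0 ∧ P = PS + H * A := by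
  have hinj : ∀ x, H *ᵥ x = 0 → x = 0 := by
    intro x hx
    rw [hH, fromRows_mulVec] at hx
    have := congrFun hx
    funext i
    simpa using this (Sum.inl i)
  have hSinv : (Sig⁻¹).PosDef := hSig.inv
  have hG : (Hᵀ * Sig⁻¹ * H).PosDef := by
    refine posDef_iff_dotProduct_mulVec.mpr ⟨?_, ?_⟩
    · have := isHermitian_conjTranspose_mul_mul H hSinv.1
      simpa using this
    · intro x hx
      have hx' : H *ᵥ x ≠ 0 := fun h => hx (hinj x h)
      have h0 := hSinv.dotProduct_mulVec_pos hx'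
      have key : star x ⬝ᵥ (Hᵀ * Sig⁻¹ * H) *ᵥ x
          = star (H *ᵥ x) ⬝ᵥ Sig⁻¹ *ᵥ (H *ᵥ x) := by
        rw [star_trivial, star_trivial, ← mulVec_mulVec, ← mulVec_mulVec,
          dotProduct_mulVec, vecMul_transpose]
      rw [key]
      exact h0
  have hGu : IsUnit (Hᵀ * Sig⁻¹ * H).det := isUnit_iff_ne_zero.mpr hG.det_pos.ne'
  obtain ⟨L, hL⟩ : ∃ L : Matrix (Fin n) (Fin n ⊕ Fin p) ℝ,
      L = (Hᵀ * Sig⁻¹ * H)⁻¹ * (Hᵀ * Sig⁻¹) := ⟨_, rfl⟩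
  have hLH : L * H = 1 := by
    rw [hL, Matrix.mul_assoc, Matrix.nonsing_inv_mul _ hGu]
  have hPSHL : PS = H * L := by rw [hPS, hL, Matrix.mul_assoc]
  clear hL hPS
  constructor
  · rintro ⟨hPP, hran⟩
    have hPH : P * H = H := by
      apply mat_ext_of_mulVec
      intro v
      have : H *ᵥ v ∈ Set.range P.mulVec := by rw [hran]; exact ⟨v, rfl⟩
      obtain ⟨w, hw⟩ := this
      calc (P * H) *ᵥ v = P *ᵥ (H *ᵥ v) := by rw [mulVec_mulVec]
        _ = P *ᵥ (P *ᵥ w) := by rw [← hw]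
        _ = (P * P) *ᵥ w := by rw [mulVec_mulVec]
        _ = H *ᵥ v := by rw [hPP, hw]
    have hHLP : H * (L * P) = P := by
      rw [← Matrix.mul_assoc]
      apply mat_ext_of_mulVec
      intro v
      have : P *ᵥ v ∈ Set.range H.mulVec := by rw [← hran]; exact ⟨v, rfl⟩
      obtain ⟨x, hx⟩ := this
      calc (H * L * P) *ᵥ v = (H * L) *ᵥ (P *ᵥ v) := by rw [← mulVec_mulVec]
        _ = (H * L) *ᵥ (H *ᵥ x) := by rw [hx]
        _ = (H * L * H) *ᵥ x := by rw [mulVec_mulVec]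
        _ = H *ᵥ x := by rw [Matrix.mul_assoc, hLH, Matrix.mul_one]
        _ = P *ᵥ v := hx
    refine ⟨L * P - L, ?_, ?_⟩
    · rw [Matrix.sub_mul, Matrix.mul_assoc, hPH, hLH, sub_self]
    · rw [Matrix.mul_sub, hHLP, hPSHL]
      abel
  · rintro ⟨A, hAH, hPeq⟩
    have h1 : H * L * H = H := by rw [Matrix.mul_assoc, hLH, Matrix.mul_one]
    have h2 : H * A * H = 0 := by rw [Matrix.mul_assoc, hAH, Matrix.mul_zero]
    have hPH : P * H = H := by
      rw [hPeq, Matrix.add_mul, hPSHL, h1, h2, add_zero]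
    constructor
    · have hPform : P = H * (L + A) := by rw [hPeq, Matrix.mul_add, hPSHL]
      rw [hPform]
      calc H * (L + A) * (H * (L + A)) = H * ((L + A) * H) * (L + A) := by
            simp [Matrix.mul_assoc]
        _ = H * (L + A) := by
            rw [Matrix.add_mul, hLH, hAH, add_zero, Matrix.mul_one]
    · ext y
      constructor
      · rintro ⟨v, rfl⟩
        refine ⟨(L + A) *ᵥ v, ?_⟩
        rw [mulVec_mulVec, Matrix.mul_add, ← hPSHL, ← hPeq]
      · rintro ⟨x, rfl⟩
        exact ⟨H *ᵥ x, by rw [mulVec_mulVec, hPH]⟩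
end

section
/- Let s_1,…,s_N,s_{N+1} be exchangeable real random variables (for instance i.i.d.), and for k ∈ {1,…,N} let s_{(k)} denote the k-th order statistic of s_1,…,s_N. Then for every k ∈ {1,…,N}: P(s_{N+1} ≤ s_{(k)}) ≥ k/(N+1) and P(s_{N+1} < s_{(k)}) ≤ k/(N+1). -/
open MeasureTheory ProbabilityTheory Matrix
open scoped ENNReal

open Finset in
/-- Counting a property of values is invariant under permuting the indices. -/
lemma count_perm {n : ℕ} (x : Fin n → ℝ) (σ : Equiv.Perm (Fin n)) (p : ℝ → Prop)
    [DecidablePred p] :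
    (univ.filter fun i => p (x (σ i))).card = (univ.filter fun i => p (x i)).card := by
  apply Finset.card_equiv σ; intro i; simp

open Finset in
lemma mono_count_lt {n : ℕ} {g : Fin n → ℝ} (hg : Monotone g) (j : Fin n) (a : ℝ) :
    a ≤ g j ↔ (univ.filter fun i => g i < a).card ≤ (j : ℕ) := by
  constructor
  · intro h
    have hsub : (univ.filter fun i => g i < a) ⊆ Finset.Iio j := by
      intro i hi
      simp only [mem_filter, mem_univ, true_and] at hi
      simp only [Finset.mem_Iio]
      by_contra hij
      exact absurd (le_trans h (hg (not_lt.mp hij))) (not_le.mpr hi)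
    simpa [Fin.card_Iio] using Finset.card_le_card hsub
  · intro h
    by_contra hlt
    push_neg at hlt
    have hsub : Finset.Iic j ⊆ (univ.filter fun i => g i < a) := by
      intro i hi
      simp only [Finset.mem_Iic] at hi
      simp only [mem_filter, mem_univ, true_and]
      exact lt_of_le_of_lt (hg hi) hlt
    have := Finset.card_le_card hsub
    rw [Fin.card_Iic] at this
    omega

open Finset in
lemma mono_count_le {n : ℕ} {g : Fin n → ℝ} (hg : Monotone g) (j : Fin n) (a : ℝ) :
    a < g j ↔ (univ.filter fun i => g i ≤ a).card ≤ (j : ℕ) := by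
  constructor
  · intro h
    have hsub : (univ.filter fun i => g i ≤ a) ⊆ Finset.Iio j := by
      intro i hi
      simp only [mem_filter, mem_univ, true_and] at hi
      simp only [Finset.mem_Iio]
      by_contra hij
      exact absurd (lt_of_le_of_lt (le_trans (hg (not_lt.mp hij)) hi) h) (lt_irrefl _)
    simpa [Fin.card_Iio] using Finset.card_le_card hsub
  · intro h
    by_contra hlt
    push_neg at hlt
    have hsub : Finset.Iic j ⊆ (univ.filter fun i => g i ≤ a) := by
      intro i hi
      simp only [Finset.mem_Iic] at hi
      simp only [mem_filter, mem_univ, true_and]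
      exact le_trans (hg hi) hlt
    have := Finset.card_le_card hsub
    rw [Fin.card_Iic] at this
    omega

open Finset in
lemma ostat_le_iff_s17 {N k : ℕ} (hk1 : 1 ≤ k) (hkN : k ≤ N) (y : Fin N → ℝ) (a : ℝ) :
    a ≤ ostat y k ↔ (univ.filter fun i => y i < a).card ≤ k - 1 := by
  rw [ostat, dif_pos ⟨hk1, hkN⟩]
  rw [mono_count_lt (Tuple.monotone_sort y) ⟨k - 1, by omega⟩ a]
  simp only [Function.comp, Fin.val_mk]
  rw [count_perm y (Tuple.sort y) (fun b => b < a)]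

open Finset in
lemma ostat_lt_iff {N k : ℕ} (hk1 : 1 ≤ k) (hkN : k ≤ N) (y : Fin N → ℝ) (a : ℝ) :
    a < ostat y k ↔ (univ.filter fun i => y i ≤ a).card ≤ k - 1 := by
  rw [ostat, dif_pos ⟨hk1, hkN⟩]
  rw [mono_count_le (Tuple.monotone_sort y) ⟨k - 1, by omega⟩ a]
  simp only [Function.comp, Fin.val_mk]
  rw [count_perm y (Tuple.sort y) (fun b => b ≤ a)]

open Finset in
/-- At least `k` of the indices have strict rank at most `k - 1`. -/
lemma lower_count {n k : ℕ} (hk1 : 1 ≤ k) (hkn : k ≤ n) (x : Fin n → ℝ) :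
    k ≤ (univ.filter fun t => (univ.filter fun i => x i < x t).card ≤ k - 1).card := by
  classical
  set σ := Tuple.sort x with hσ
  have hmono : Monotone (x ∘ σ) := Tuple.monotone_sort x
  have hsub : (Finset.Iic (⟨k - 1, by omega⟩ : Fin n)).image σ ⊆
      (univ.filter fun t => (univ.filter fun i => x i < x t).card ≤ k - 1) := by
    intro t ht
    simp only [Finset.mem_image, Finset.mem_Iic] at ht
    obtain ⟨j, hj, rfl⟩ := ht
    simp only [mem_filter, mem_univ, true_and]
    have : (univ.filter fun i => x i < x (σ j)).card ≤ (j : ℕ) := by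
      rw [← count_perm x σ (fun b => b < x (σ j))]
      exact (mono_count_lt hmono j (x (σ j))).mp (le_refl _)
    have hj' : (j : ℕ) ≤ k - 1 := hj
    omega
  have hcard := Finset.card_le_card hsub
  rw [Finset.card_image_of_injective _ σ.injective, Fin.card_Iic, Fin.val_mk] at hcard
  omega

open Finset in
/-- At most `k` of the indices have weak rank at most `k`. -/
lemma upper_count {n k : ℕ} (x : Fin n → ℝ) :
    (univ.filter fun t => (univ.filter fun i => x i ≤ x t).card ≤ k).card ≤ k := by
  classical
  by_contra h
  push_neg at h
  set T := (univ.filter fun t => (univ.filter fun i => x i ≤ x t).card ≤ k) with hT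
  have hne : T.Nonempty := Finset.card_pos.mp (by omega)
  obtain ⟨t0, ht0, hmax⟩ := T.exists_max_image x hne
  have hsub : T ⊆ (univ.filter fun i => x i ≤ x t0) := by
    intro t ht
    simp only [mem_filter, mem_univ, true_and]
    exact hmax t ht
  have h2 : (univ.filter fun i => x i ≤ x t0).card ≤ k := by
    have := ht0; rw [hT, mem_filter] at this; exact this.2
  have := Finset.card_le_card hsub
  omega

open Finset in
/-- For exchangeable scores, the test score falls below the `k`-th order
statistic of the `N` calibration scores with probability at least `k/(N+1)` (for `≤`) and
at most `k/(N+1)` (for `<`). -/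
theorem stmt17 {Ω : Type*} [MeasurableSpace Ω] (μ : Measure Ω) [IsProbabilityMeasure μ]
    (N : ℕ) (hN : 1 ≤ N) (s : Fin (N + 1) → Ω → ℝ) (hmeas : ∀ t, Measurable (s t))
    (hexch : ∀ σ : Equiv.Perm (Fin (N + 1)),
      Measure.map (fun ω => fun t => s (σ t) ω) μ = Measure.map (fun ω => fun t => s t ω) μ)
    (k : ℕ) (hk1 : 1 ≤ k) (hkN : k ≤ N) :
    ENNReal.ofReal ((k : ℝ) / ((N : ℝ) + 1)) ≤
        μ {ω | s (Fin.last N) ω ≤ ostat (fun t : Fin N => s t.castSucc ω) k} ∧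
      μ {ω | s (Fin.last N) ω < ostat (fun t : Fin N => s t.castSucc ω) k} ≤
        ENNReal.ofReal ((k : ℝ) / ((N : ℝ) + 1)) := by
  classical
  set f : Ω → (Fin (N + 1) → ℝ) := fun ω t => s t ω with hf
  have hfm : Measurable f := measurable_pi_lambda _ (fun t => hmeas t)
  -- measurability of counting functions
  have hcnt : ∀ (t : Fin (N + 1)) (p : ℝ → ℝ → Prop) [∀ a b, Decidable (p a b)],
      (∀ i : Fin (N + 1), MeasurableSet {x : Fin (N + 1) → ℝ | p (x i) (x t)}) →
      Measurable (fun x : Fin (N + 1) → ℝ => (univ.filter fun i => p (x i) (x t)).card) := by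
    intro t p _ hp
    have : (fun x : Fin (N + 1) → ℝ => (univ.filter fun i => p (x i) (x t)).card)
        = fun x => ∑ i : Fin (N + 1), if p (x i) (x t) then 1 else 0 := by
      funext x; rw [Finset.card_filter]
    rw [this]
    exact Finset.measurable_sum _ (fun i _ =>
      Measurable.ite (hp i) measurable_const measurable_const)
  -- the two families of sets in the product space
  set Alt : Fin (N + 1) → Set (Fin (N + 1) → ℝ) :=
    fun t => {x | (univ.filter fun i => x i < x t).card ≤ k - 1} with hAlt
  set Ale : Fin (N + 1) → Set (Fin (N + 1) → ℝ) :=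
    fun t => {x | (univ.filter fun i => x i ≤ x t).card ≤ k} with hAle
  have hAltm : ∀ t, MeasurableSet (Alt t) := by
    intro t
    have hm := hcnt t (· < ·) (fun i =>
      measurableSet_lt (measurable_pi_apply i) (measurable_pi_apply t))
    have h2 : MeasurableSet ((fun x : Fin (N + 1) → ℝ =>
        (univ.filter fun i => x i < x t).card) ⁻¹' Set.Iic (k - 1)) := hm trivial
    exact h2
  have hAlem : ∀ t, MeasurableSet (Ale t) := by
    intro t
    have hm := hcnt t (· ≤ ·) (fun i =>
      measurableSet_le (measurable_pi_apply i) (measurable_pi_apply t))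
    have h2 : MeasurableSet ((fun x : Fin (N + 1) → ℝ =>
        (univ.filter fun i => x i ≤ x t).card) ⁻¹' Set.Iic k) := hm trivial
    exact h2
  -- counting over Fin (N+1) versus Fin N
  have hcast_lt : ∀ x : Fin (N + 1) → ℝ,
      (univ.filter fun i : Fin (N + 1) => x i < x (Fin.last N)).card
        = (univ.filter fun i : Fin N => x i.castSucc < x (Fin.last N)).card := by
    intro x
    rw [Finset.card_filter, Finset.card_filter, Fin.sum_univ_castSucc]
    simp
  have hcast_le : ∀ x : Fin (N + 1) → ℝ,
      (univ.filter fun i : Fin (N + 1) => x i ≤ x (Fin.last N)).card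
        = (univ.filter fun i : Fin N => x i.castSucc ≤ x (Fin.last N)).card + 1 := by
    intro x
    rw [Finset.card_filter, Finset.card_filter, Fin.sum_univ_castSucc]
    simp
  -- identification of the events
  have hev_le : {ω | s (Fin.last N) ω ≤ ostat (fun t : Fin N => s t.castSucc ω) k}
      = f ⁻¹' (Alt (Fin.last N)) := by
    ext ω
    simp only [Set.mem_setOf_eq, Set.mem_preimage, hAlt]
    rw [ostat_le_iff_s17 hk1 hkN, hcast_lt (f ω)]
  have hev_lt : {ω | s (Fin.last N) ω < ostat (fun t : Fin N => s t.castSucc ω) k}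
      = f ⁻¹' (Ale (Fin.last N)) := by
    ext ω
    simp only [Set.mem_setOf_eq, Set.mem_preimage, hAle]
    rw [ostat_lt_iff hk1 hkN, hcast_le (f ω)]
    have hrfl : (univ.filter fun i : Fin N => s i.castSucc ω ≤ s (Fin.last N) ω)
        = (univ.filter fun i : Fin N => f ω i.castSucc ≤ f ω (Fin.last N)) := rfl
    rw [hrfl]
    omega
  -- exchangeability: all events have the same probability
  have hswap : ∀ (A : Fin (N + 1) → Set (Fin (N + 1) → ℝ)),
      (∀ t, MeasurableSet (A t)) →
      (∀ (t : Fin (N + 1)) (x : Fin (N + 1) → ℝ),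
        x ∘ (Equiv.swap t (Fin.last N)) ∈ A (Fin.last N) ↔ x ∈ A t) →
      ∀ t, μ (f ⁻¹' A t) = μ (f ⁻¹' A (Fin.last N)) := by
    intro A hAm hAcomp t
    set σ := Equiv.swap t (Fin.last N) with hσ
    have hg : Measurable (fun ω => fun i => s (σ i) ω) :=
      measurable_pi_lambda _ (fun i => hmeas _)
    have h1 : (fun ω => fun i => s (σ i) ω) ⁻¹' (A (Fin.last N)) = f ⁻¹' (A t) := by
      ext ω
      simp only [Set.mem_preimage]
      exact hAcomp t (f ω)
    calc μ (f ⁻¹' A t) = μ ((fun ω => fun i => s (σ i) ω) ⁻¹' A (Fin.last N)) := by rw [h1]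
      _ = (Measure.map (fun ω => fun i => s (σ i) ω) μ) (A (Fin.last N)) :=
          (Measure.map_apply hg (hAm _)).symm
      _ = (Measure.map (fun ω => fun i => s i ω) μ) (A (Fin.last N)) := by rw [hexch σ]
      _ = μ (f ⁻¹' A (Fin.last N)) := Measure.map_apply hfm (hAm _)
  have hswap_lt : ∀ t, μ (f ⁻¹' Alt t) = μ (f ⁻¹' Alt (Fin.last N)) := by
    apply hswap _ hAltm
    intro t x
    simp only [hAlt, Set.mem_setOf_eq, Function.comp, Equiv.swap_apply_right]
    rw [count_perm x (Equiv.swap t (Fin.last N)) (fun b => b < x t)]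
  have hswap_le : ∀ t, μ (f ⁻¹' Ale t) = μ (f ⁻¹' Ale (Fin.last N)) := by
    apply hswap _ hAlem
    intro t x
    simp only [hAle, Set.mem_setOf_eq, Function.comp, Equiv.swap_apply_right]
    rw [count_perm x (Equiv.swap t (Fin.last N)) (fun b => b ≤ x t)]
  -- sums of indicator functions
  have hsum : ∀ (A : Fin (N + 1) → Set (Fin (N + 1) → ℝ)), (∀ t, MeasurableSet (A t)) →
      ∑ t : Fin (N + 1), μ (f ⁻¹' A t)
        = ∫⁻ ω, ((univ.filter fun t => f ω ∈ A t).card : ℝ≥0∞) ∂μ := by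
    intro A hAm
    have hEm : ∀ t, MeasurableSet (f ⁻¹' A t) := fun t => hfm (hAm t)
    have h1 : ∀ t : Fin (N + 1), μ (f ⁻¹' A t)
        = ∫⁻ ω, (f ⁻¹' A t).indicator (1 : Ω → ℝ≥0∞) ω ∂μ := by
      intro t
      rw [lintegral_indicator_one (hEm t)]
    have h2 := lintegral_finset_sum (μ := μ) Finset.univ
      (f := fun (t : Fin (N + 1)) (ω : Ω) => (f ⁻¹' A t).indicator (1 : Ω → ℝ≥0∞) ω)
      (fun t _ => measurable_const.indicator (hEm t))
    rw [Finset.sum_congr rfl (fun t _ => h1 t), ← h2]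
    congr 1
    funext ω
    rw [Finset.card_filter]
    push_cast
    apply Finset.sum_congr rfl
    intro t _
    by_cases h : f ω ∈ A t
    · rw [if_pos h, Set.indicator_of_mem (Set.mem_preimage.mpr h)]
      rfl
    · rw [if_neg h, Set.indicator_of_notMem (fun hc => h (Set.mem_preimage.mp hc))]
  -- lower bound
  have hlow : (k : ℝ≥0∞) ≤ (N + 1 : ℕ) * μ (f ⁻¹' Alt (Fin.last N)) := by
    have h2 : (k : ℝ≥0∞) ≤ ∑ t : Fin (N + 1), μ (f ⁻¹' Alt t) := by
      rw [hsum _ hAltm]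
      have hk' : (k : ℝ≥0∞) = ∫⁻ _, (k : ℝ≥0∞) ∂μ := by simp
      rw [hk']
      apply lintegral_mono
      intro ω
      have h := lower_count hk1 (show k ≤ N + 1 by omega) (f ω)
      have he : (univ.filter fun t => (univ.filter fun i => f ω i < f ω t).card ≤ k - 1)
          = (univ.filter fun t => f ω ∈ Alt t) := by
        apply Finset.filter_congr; intro t _; simp [hAlt]
      rw [he] at h
      have h'' : (k : ℝ≥0∞) ≤ ((univ.filter fun t => f ω ∈ Alt t).card : ℝ≥0∞) := by
        exact_mod_cast h
      convert h'' using 4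
    calc (k : ℝ≥0∞) ≤ ∑ t : Fin (N + 1), μ (f ⁻¹' Alt t) := h2
      _ = (N + 1 : ℕ) * μ (f ⁻¹' Alt (Fin.last N)) := by
          rw [Finset.sum_congr rfl (fun t _ => hswap_lt t), Finset.sum_const, Finset.card_univ,
            Fintype.card_fin, nsmul_eq_mul]
  -- upper bound
  have hup : (N + 1 : ℕ) * μ (f ⁻¹' Ale (Fin.last N)) ≤ (k : ℝ≥0∞) := by
    have h2 : ∑ t : Fin (N + 1), μ (f ⁻¹' Ale t) ≤ (k : ℝ≥0∞) := by
      rw [hsum _ hAlem]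
      have hk' : (k : ℝ≥0∞) = ∫⁻ _, (k : ℝ≥0∞) ∂μ := by simp
      rw [hk']
      apply lintegral_mono
      intro ω
      have h := upper_count (k := k) (f ω)
      have he : (univ.filter fun t => (univ.filter fun i => f ω i ≤ f ω t).card ≤ k)
          = (univ.filter fun t => f ω ∈ Ale t) := by
        apply Finset.filter_congr; intro t _; simp [hAle]
      rw [he] at h
      have h'' : (((univ.filter fun t => f ω ∈ Ale t).card : ℕ) : ℝ≥0∞) ≤ (k : ℝ≥0∞) := by
        exact_mod_cast h
      convert h'' using 4
    calc (N + 1 : ℕ) * μ (f ⁻¹' Ale (Fin.last N))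
        = ∑ t : Fin (N + 1), μ (f ⁻¹' Ale t) := by
          rw [Finset.sum_congr rfl (fun t _ => hswap_le t), Finset.sum_const, Finset.card_univ,
            Fintype.card_fin, nsmul_eq_mul]
      _ ≤ (k : ℝ≥0∞) := h2
  -- convert k/(N+1)
  have hof : ENNReal.ofReal ((k : ℝ) / ((N : ℝ) + 1)) = (k : ℝ≥0∞) / ((N + 1 : ℕ) : ℝ≥0∞) := by
    rw [ENNReal.ofReal_div_of_pos (by positivity)]
    congr 1
    · exact ENNReal.ofReal_natCast k
    · rw [show ((N : ℝ) + 1) = ((N + 1 : ℕ) : ℝ) by push_cast; ring]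
      exact ENNReal.ofReal_natCast _
  have hb0 : ((N + 1 : ℕ) : ℝ≥0∞) ≠ 0 := by exact_mod_cast Nat.succ_ne_zero N
  have hbt : ((N + 1 : ℕ) : ℝ≥0∞) ≠ ⊤ := ENNReal.natCast_ne_top _
  constructor
  · rw [hev_le, hof]
    rw [ENNReal.div_le_iff_le_mul (Or.inl hb0) (Or.inl hbt)]
    calc (k : ℝ≥0∞) ≤ (N + 1 : ℕ) * μ (f ⁻¹' Alt (Fin.last N)) := hlow
      _ = μ (f ⁻¹' Alt (Fin.last N)) * (N + 1 : ℕ) := mul_comm _ _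
  · rw [hev_lt, hof]
    rw [ENNReal.le_div_iff_mul_le (Or.inl hb0) (Or.inl hbt)]
    calc μ (f ⁻¹' Ale (Fin.last N)) * (N + 1 : ℕ)
        = (N + 1 : ℕ) * μ (f ⁻¹' Ale (Fin.last N)) := mul_comm _ _
      _ ≤ (k : ℝ≥0∞) := hup
end

section
/- Let ŝ_1,…,ŝ_N be i.i.d. random vectors in ℝ^m whose common distribution is the elliptical distribution of c + Mz, where c ∈ ℝ^m is deterministic, M is an m×k real matrix with MMᵀ of rank k, and z follows a spherical distribution on ℝ^k; set Γ = MMᵀ. Then there exist i.i.d. real random variables v_1,…,v_N such that for every component i ∈ {1,…,m}, the random vector (ŝ_{1,i},…,ŝ_{N,i}) has the same joint distribution as (c_i + √(Γ_{i,i}) v_1,…, c_i + √(Γ_{i,i}) v_N). Consequently, for any 1 ≤ k₁ ≤ k₂ ≤ N, the difference of order statistics ŝ_{(k₂),i} − ŝ_{(k₁),i} has the same distribution as √(Γ_{i,i}) (v_{(k₂)} − v_{(k₁)}), simultaneously for all i. -/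
open MeasureTheory ProbabilityTheory Matrix
open scoped ENNReal

lemma sort_affine {N : ℕ} (a r : ℝ) (hr : 0 < r) (v : Fin N → ℝ) :
    Tuple.sort (fun t => a + r * v t) = Tuple.sort v := by
  have h := (Tuple.eq_sort_iff (f := v) (σ := Tuple.sort v)).mp rfl
  symm
  rw [Tuple.eq_sort_iff]
  constructor
  · intro i j hij
    have := h.1 hij
    simp only [Function.comp_apply] at this ⊢
    nlinarith
  · intro i j hij heq
    apply h.2 i j hij
    have : r * v (Tuple.sort v i) = r * v (Tuple.sort v j) := by
      simpa using heq
    exact mul_left_cancel₀ hr.ne' this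

lemma ostat_affine {N : ℕ} (a r : ℝ) (hr : 0 ≤ r) (v : Fin N → ℝ) (k : ℕ) :
    ostat (fun t => a + r * v t) k = (if 1 ≤ k ∧ k ≤ N then a else 0) + r * ostat v k := by
  rcases eq_or_lt_of_le hr with hr0 | hrpos
  · subst hr0
    simp only [zero_mul, add_zero, mul_zero]
    unfold ostat
    by_cases h : 1 ≤ k ∧ k ≤ N <;> simp [h]
  · unfold ostat
    by_cases h : 1 ≤ k ∧ k ≤ N
    · simp only [sort_affine a r hrpos v, Function.comp_apply]
      simp [h]
    · simp [h]

lemma measurableSet_sort_eq {N : ℕ} (σ : Equiv.Perm (Fin N)) :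
    MeasurableSet {s : Fin N → ℝ | Tuple.sort s = σ} := by
  have heq : {s : Fin N → ℝ | Tuple.sort s = σ} =
      (⋂ (i : Fin N), ⋂ (j : Fin N), ⋂ (_ : i ≤ j), {s : Fin N → ℝ | s (σ i) ≤ s (σ j)}) ∩
      (⋂ (i : Fin N), ⋂ (j : Fin N),
        {s : Fin N → ℝ | i < j → s (σ i) = s (σ j) → σ i < σ j}) := by
    ext s
    simp only [Set.mem_setOf_eq, Set.mem_inter_iff, Set.mem_iInter]
    rw [eq_comm, Tuple.eq_sort_iff]
    constructor
    · rintro ⟨h1, h2⟩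
      exact ⟨fun i j hij => h1 hij, fun i j => h2 i j⟩
    · rintro ⟨h1, h2⟩
      exact ⟨fun i j hij => h1 i j hij, fun i j => h2 i j⟩
  rw [heq]
  refine MeasurableSet.inter ?_ ?_
  · refine MeasurableSet.iInter fun i => MeasurableSet.iInter fun j =>
      MeasurableSet.iInter fun _ => ?_
    exact measurableSet_le (measurable_pi_apply _) (measurable_pi_apply _)
  · refine MeasurableSet.iInter fun i => MeasurableSet.iInter fun j => ?_
    by_cases hij : i < j
    · by_cases hσ : σ i < σ j
      · have : {s : Fin N → ℝ | i < j → s (σ i) = s (σ j) → σ i < σ j} = Set.univ := by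
          ext s; simp [hij, hσ]
        rw [this]; exact MeasurableSet.univ
      · have : {s : Fin N → ℝ | i < j → s (σ i) = s (σ j) → σ i < σ j} =
            {s : Fin N → ℝ | s (σ i) = s (σ j)}ᶜ := by
          ext s; simp [hij, hσ]
        rw [this]
        have : MeasurableSet {s : Fin N → ℝ | s (σ i) = s (σ j)} := by
          have h1 := measurableSet_le (measurable_pi_apply (X := fun _ : Fin N => ℝ) (σ i)) (measurable_pi_apply (σ j))
          have h2 := measurableSet_le (measurable_pi_apply (X := fun _ : Fin N => ℝ) (σ j)) (measurable_pi_apply (σ i))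
          have : {s : Fin N → ℝ | s (σ i) = s (σ j)} =
              {s : Fin N → ℝ | s (σ i) ≤ s (σ j)} ∩ {s : Fin N → ℝ | s (σ j) ≤ s (σ i)} := by
            ext s; simp only [Set.mem_setOf_eq, Set.mem_inter_iff]
            constructor
            · intro h; exact ⟨le_of_eq h, ge_of_eq h⟩
            · intro h; exact le_antisymm h.1 h.2
          rw [this]; exact h1.inter h2
        exact this.compl
    · have : {s : Fin N → ℝ | i < j → s (σ i) = s (σ j) → σ i < σ j} = Set.univ := by
        ext s; simp [hij]
      rw [this]; exact MeasurableSet.univ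

lemma joint_law_pi {Ω : Type*} [MeasurableSpace Ω] {μ : Measure Ω} [IsProbabilityMeasure μ]
    {N : ℕ} {f : Fin N → Ω → ℝ} (hf : ∀ t, Measurable (f t))
    (hind : iIndepFun f μ) :
    Measure.map (fun ω t => f t ω) μ = Measure.pi (fun t => Measure.map (f t) μ) := by
  haveI : ∀ t, IsProbabilityMeasure (Measure.map (f t) μ) :=
    fun t => Measure.isProbabilityMeasure_map (hf t).aemeasurable
  refine (Measure.pi_eq (μ := fun t => Measure.map (f t) μ) fun s hs => ?_).symm
  rw [Measure.map_apply (measurable_pi_lambda _ fun t => hf t) (MeasurableSet.univ_pi hs)]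
  have hpre : (fun ω t => f t ω) ⁻¹' Set.pi Set.univ s = ⋂ t ∈ Finset.univ, f t ⁻¹' s t := by
    ext ω; simp [Set.mem_pi]
  rw [hpre, hind.measure_inter_preimage_eq_mul Finset.univ (fun t _ => hs t)]
  exact Finset.prod_congr rfl fun t _ => (Measure.map_apply (hf t) (hs t)).symm


lemma measurable_dot {k : ℕ} (u : Fin k → ℝ) :
    Measurable (fun x : Fin k → ℝ => u ⬝ᵥ x) :=
  Finset.measurable_sum _ fun i _ => (measurable_pi_apply i).const_mul _

lemma exists_householder {k : ℕ} (u w : Fin k → ℝ) (huw : u ⬝ᵥ u = w ⬝ᵥ w) :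
    ∃ A : Matrix (Fin k) (Fin k) ℝ, A * Aᵀ = 1 ∧ ∀ x, u ⬝ᵥ A.mulVec x = w ⬝ᵥ x := by
  by_cases hd : u = w
  · exact ⟨1, by simp, fun x => by simp [hd]⟩
  set d : Fin k → ℝ := u - w with hdef
  have hdne : d ≠ 0 := sub_ne_zero.mpr hd
  set q : ℝ := d ⬝ᵥ d with hq
  have hqpos : 0 < q := by
    have h0 : q ≠ 0 := fun h => hdne (dotProduct_self_eq_zero.mp h)
    have h1 : 0 ≤ q := Finset.sum_nonneg fun i _ => mul_self_nonneg (d i)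
    exact lt_of_le_of_ne h1 (Ne.symm h0)
  set P : Matrix (Fin k) (Fin k) ℝ := vecMulVec d d with hP
  have hPsymm : Pᵀ = P := by
    ext i j; simp [hP, Matrix.vecMulVec_apply, mul_comm]
  have hPP : P * P = q • P := by
    ext i j
    simp only [Matrix.mul_apply, Matrix.smul_apply, hP, Matrix.vecMulVec_apply, smul_eq_mul, hq,
      dotProduct]
    rw [Finset.sum_mul]
    exact Finset.sum_congr rfl fun l _ => by ring
  set A : Matrix (Fin k) (Fin k) ℝ := 1 - (2 / q) • P with hA
  have hAsymm : Aᵀ = A := by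
    rw [hA, Matrix.transpose_sub, Matrix.transpose_one, Matrix.transpose_smul, hPsymm]
  have hPu : P.mulVec u = (d ⬝ᵥ u) • d := by
    ext i
    simp only [Matrix.mulVec, hP, Matrix.vecMulVec_apply, Pi.smul_apply, smul_eq_mul, dotProduct]
    rw [Finset.sum_mul]
    exact Finset.sum_congr rfl fun l _ => by ring
  have hdu : 2 * (d ⬝ᵥ u) = q := by
    have h1 : d ⬝ᵥ u = u ⬝ᵥ u - w ⬝ᵥ u := by
      simp [hdef, sub_dotProduct]
    have h2 : q = u ⬝ᵥ u - u ⬝ᵥ w - (w ⬝ᵥ u - w ⬝ᵥ w) := by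
      simp only [hq, hdef, sub_dotProduct, dotProduct_sub]
      linarith [dotProduct_comm u w]
    have h3 : u ⬝ᵥ w = w ⬝ᵥ u := dotProduct_comm u w
    rw [h1, h2, h3, ← huw]; ring
  have hAu : A.mulVec u = w := by
    rw [hA, Matrix.sub_mulVec, Matrix.one_mulVec, Matrix.smul_mulVec, hPu, smul_smul]
    have : 2 / q * (d ⬝ᵥ u) = 1 := by
      field_simp; ring
      linarith [hdu]
    rw [this, one_smul, hdef]
    abel
  have hAA : A * Aᵀ = 1 := by
    rw [hAsymm, hA]
    have hc : 2 / q * (2 / q) * q = 2 / q + 2 / q := by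
      field_simp; ring
    rw [Matrix.sub_mul, Matrix.mul_sub, Matrix.mul_sub, Matrix.one_mul, Matrix.mul_one,
      Matrix.smul_mul, Matrix.one_mul, Matrix.mul_smul, hPP, smul_smul, smul_smul, hc]
    module
  refine ⟨A, hAA, fun x => ?_⟩
  rw [Matrix.dotProduct_mulVec, ← Matrix.mulVec_transpose, hAsymm, hAu]

lemma map_const_add_dot {Ω : Type*} [MeasurableSpace Ω] {μ : Measure Ω} {k : ℕ}
    {z : Ω → Fin k → ℝ} (hz : Measurable z) (hsph : IsSpherical μ z)
    (b : ℝ) (u w : Fin k → ℝ) (huw : u ⬝ᵥ u = w ⬝ᵥ w) :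
    Measure.map (fun ω => b + w ⬝ᵥ z ω) μ = Measure.map (fun ω => b + u ⬝ᵥ z ω) μ := by
  obtain ⟨A, hAA, hAdot⟩ := exists_householder u w huw
  have hmA : Measurable (fun ω => A.mulVec (z ω)) :=
    measurable_pi_lambda _ fun i => (measurable_dot (A i)).comp hz
  calc Measure.map (fun ω => b + w ⬝ᵥ z ω) μ
      = Measure.map ((fun x => b + u ⬝ᵥ x) ∘ (fun ω => A.mulVec (z ω))) μ := by
        congr 1; funext ω; simp only [Function.comp_apply, hAdot (z ω)]
    _ = Measure.map (fun x => b + u ⬝ᵥ x) (Measure.map (fun ω => A.mulVec (z ω)) μ) :=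
        (Measure.map_map ((measurable_dot u).const_add b) hmA).symm
    _ = Measure.map (fun x => b + u ⬝ᵥ x) (Measure.map z μ) := by rw [hsph A hAA]
    _ = Measure.map (fun ω => b + u ⬝ᵥ z ω) μ :=
        Measure.map_map ((measurable_dot u).const_add b) hz

/-- For i.i.d. vectors with a common elliptical distribution `c + Mz`
(`Γ = M Mᵀ`), there exist i.i.d. real random variables `v_1, …, v_N` such that, for every
component `i`, the joint law of `(ŝ_{1,i}, …, ŝ_{N,i})` is that of
`(c_i + √(Γ_{i,i}) v_1, …, c_i + √(Γ_{i,i}) v_N)`; consequently differences of order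
statistics satisfy `ŝ_{(k₂),i} − ŝ_{(k₁),i} ∼ √(Γ_{i,i}) (v_{(k₂)} − v_{(k₁)})`. -/
theorem stmt19 {Ω : Type*} [MeasurableSpace Ω] (μ : Measure Ω) [IsProbabilityMeasure μ]
    (N m k : ℕ) (hN : 1 ≤ N)
    (c : Fin m → ℝ) (M : Matrix (Fin m) (Fin k) ℝ) (hM : (M * Mᵀ).rank = k)
    (z : Ω → Fin k → ℝ) (hz : Measurable z) (hsph : IsSpherical μ z)
    (Γ : Matrix (Fin m) (Fin m) ℝ) (hΓ : Γ = M * Mᵀ)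
    (shat : Fin N → Ω → Fin m → ℝ) (hmeas : ∀ t, Measurable (shat t))
    (hindep : iIndepFun shat μ)
    (hlaw : ∀ t, Measure.map (shat t) μ = Measure.map (fun ω => c + M.mulVec (z ω)) μ) :
    ∃ v : Fin N → Ω → ℝ,
      (∀ t, Measurable (v t)) ∧
      iIndepFun v μ ∧
      (∀ t t', IdentDistrib (v t) (v t') μ μ) ∧
      (∀ i : Fin m,
        IdentDistrib (fun ω => fun t => shat t ω i)
          (fun ω => fun t => c i + Real.sqrt (Γ i i) * v t ω) μ μ) ∧
      (∀ k₁ k₂ : ℕ, 1 ≤ k₁ → k₁ ≤ k₂ → k₂ ≤ N → ∀ i : Fin m,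
        IdentDistrib
          (fun ω => ostat (fun t => shat t ω i) k₂ - ostat (fun t => shat t ω i) k₁)
          (fun ω => Real.sqrt (Γ i i) *
            (ostat (fun t => v t ω) k₂ - ostat (fun t => v t ω) k₁)) μ μ) := by
  subst hΓ
  have hdiag : ∀ i, (M * Mᵀ) i i = M i ⬝ᵥ M i := by
    intro i; simp [Matrix.mul_apply, dotProduct, Matrix.transpose_apply]
  have hdiag_nonneg : ∀ i, 0 ≤ (M * Mᵀ) i i := by
    intro i; rw [hdiag]; exact Finset.sum_nonneg fun j _ => mul_self_nonneg _
  have hzc : Measurable (fun ω => c + M.mulVec (z ω)) :=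
    measurable_pi_lambda _ fun i => ((measurable_dot (M i)).comp hz).const_add (c i)
  obtain ⟨φ, hφm, hφlaw⟩ : ∃ φ : (Fin m → ℝ) → ℝ, Measurable φ ∧
      ∀ i : Fin m,
        Measure.map (fun ω => c i + Real.sqrt ((M * Mᵀ) i i) * φ (c + M.mulVec (z ω))) μ
          = Measure.map (fun ω => c i + M i ⬝ᵥ z ω) μ := by
    by_cases hex : ∃ i₀, (M * Mᵀ) i₀ i₀ ≠ 0
    · obtain ⟨i₀, hi₀⟩ := hex
      set r := Real.sqrt ((M * Mᵀ) i₀ i₀) with hr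
      have hrpos : 0 < r := Real.sqrt_pos.mpr (lt_of_le_of_ne (hdiag_nonneg i₀) (Ne.symm hi₀))
      refine ⟨fun x => (x i₀ - c i₀) / r, ((measurable_pi_apply i₀).sub_const _).div_const _, ?_⟩
      intro i
      set s := Real.sqrt ((M * Mᵀ) i i) with hs
      have heq1' : (fun ω => c i + s * (((c + M.mulVec (z ω)) i₀ - c i₀) / r))
          = fun ω => c i + ((s / r) • M i₀) ⬝ᵥ z ω := by
        funext ω
        have : (c + M.mulVec (z ω)) i₀ = c i₀ + M i₀ ⬝ᵥ z ω := rfl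
        rw [this, smul_dotProduct, smul_eq_mul]
        ring
      rw [heq1']
      apply map_const_add_dot hz hsph
      rw [smul_dotProduct, dotProduct_smul]
      have hs2 : s * s = (M * Mᵀ) i i := Real.mul_self_sqrt (hdiag_nonneg i)
      have hr2 : r * r = (M * Mᵀ) i₀ i₀ := Real.mul_self_sqrt (hdiag_nonneg i₀)
      rw [← hdiag, smul_eq_mul, smul_eq_mul, ← hdiag]
      field_simp
      nlinarith [hs2, hr2, hdiag i, hdiag i₀]
    · push_neg at hex
      have hM0 : ∀ i, M i ⬝ᵥ M i = 0 := fun i => by rw [← hdiag]; exact hex i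
      refine ⟨fun _ => 0, measurable_const, fun i => ?_⟩
      congr 1
      funext ω
      have h1 : M i ⬝ᵥ z ω = 0 := by
        have : (fun j => M i j) = (0 : Fin k → ℝ) :=
          dotProduct_self_eq_zero.mp (hM0 i)
        show (fun j => M i j) ⬝ᵥ z ω = 0
        rw [this, zero_dotProduct]
      rw [h1]
      ring
  have hclaim4 : ∀ i : Fin m, IdentDistrib (fun ω => fun t => shat t ω i)
      (fun ω => fun t => c i + Real.sqrt ((M * Mᵀ) i i) * φ (shat t ω)) μ μ := by
    intro i
    set s := Real.sqrt ((M * Mᵀ) i i) with hs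
    have hg : Measurable (fun x : Fin m → ℝ => c i + s * φ x) := (hφm.const_mul s).const_add _
    have hind1 : iIndepFun (fun t => fun ω => shat t ω i) μ :=
      hindep.comp (fun _ x => x i) (fun _ => measurable_pi_apply i)
    have hind2 : iIndepFun
        (fun t => fun ω => c i + s * φ (shat t ω)) μ :=
      hindep.comp (fun _ x => c i + s * φ x) (fun _ => hg)
    have hm1 : ∀ t, Measurable (fun ω => shat t ω i) :=
      fun t => (measurable_pi_apply i).comp (hmeas t)
    have hm2 : ∀ t, Measurable (fun ω => c i + s * φ (shat t ω)) :=
      fun t => hg.comp (hmeas t)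
    have hmap1 : ∀ t, Measure.map (fun ω => shat t ω i) μ
        = Measure.map (fun ω => c i + M i ⬝ᵥ z ω) μ := by
      intro t
      rw [show (fun ω => shat t ω i) = (fun x : Fin m → ℝ => x i) ∘ shat t from rfl,
        ← Measure.map_map (measurable_pi_apply i) (hmeas t), hlaw t,
        Measure.map_map (measurable_pi_apply i) hzc]
      rfl
    have hmap2 : ∀ t, Measure.map (fun ω => c i + s * φ (shat t ω)) μ
        = Measure.map (fun ω => c i + M i ⬝ᵥ z ω) μ := by
      intro t
      rw [show (fun ω => c i + s * φ (shat t ω))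
          = (fun x : Fin m → ℝ => c i + s * φ x) ∘ shat t from rfl,
        ← Measure.map_map hg (hmeas t), hlaw t, Measure.map_map hg hzc]
      exact hφlaw i
    refine ⟨(measurable_pi_lambda _ hm1).aemeasurable,
      (measurable_pi_lambda _ hm2).aemeasurable, ?_⟩
    rw [joint_law_pi hm1 hind1, joint_law_pi hm2 hind2]
    congr 1
    funext t
    rw [hmap1 t, hmap2 t]
  refine ⟨fun t ω => φ (shat t ω), fun t => hφm.comp (hmeas t),
    hindep.comp (fun _ => φ) (fun _ => hφm), ?_, hclaim4, ?_⟩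
  · -- identically distributed
    have hvmap : ∀ t, Measure.map (fun ω => φ (shat t ω)) μ
        = Measure.map (fun ω => φ (c + M.mulVec (z ω))) μ := by
      intro t
      rw [show (fun ω => φ (shat t ω)) = φ ∘ shat t from rfl,
        ← Measure.map_map hφm (hmeas t), hlaw t, Measure.map_map hφm hzc]
      rfl
    intro t t'
    exact ⟨(hφm.comp (hmeas t)).aemeasurable, (hφm.comp (hmeas t')).aemeasurable,
      by rw [hvmap t, hvmap t']⟩
  · -- claim 5
    intro k₁ k₂ hk1 hk12 hk2 i
    have hsnn : 0 ≤ Real.sqrt ((M * Mᵀ) i i) := Real.sqrt_nonneg _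
    have hident4 := hclaim4 i
    have hF : Measurable (fun u : Fin N → ℝ => ostat u k₂ - ostat u k₁) :=
      (measurable_ostat k₂).sub (measurable_ostat k₁)
    have h := hident4.comp hF
    have he2 : ((fun u : Fin N → ℝ => ostat u k₂ - ostat u k₁)
          ∘ (fun ω => fun t => c i + Real.sqrt ((M * Mᵀ) i i) * φ (shat t ω)))
        = fun ω => Real.sqrt ((M * Mᵀ) i i) *
            (ostat (fun t => φ (shat t ω)) k₂ - ostat (fun t => φ (shat t ω)) k₁) := by
      funext ω
      simp only [Function.comp_apply]
      rw [ostat_affine (c i) _ hsnn _ k₂, ostat_affine (c i) _ hsnn _ k₁]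
      have h2 : (1 ≤ k₂ ∧ k₂ ≤ N) := ⟨le_trans hk1 hk12, hk2⟩
      have h1 : (1 ≤ k₁ ∧ k₁ ≤ N) := ⟨hk1, le_trans hk12 hk2⟩
      rw [if_pos h2, if_pos h1]
      ring
    rw [he2] at h
    exact h
end
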